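/- arXiv:2309.15632 — 4 statements merged into one kernel-verified Lean document; each statement's English description precedes it below -/
import Mathlib

section
/- Let A ∈ ℝ^{n×n}, B ∈ ℝ^{n×m}, D ∈ ℝ^{n×q}, C ∈ ℝ^{p×n}, F ∈ ℝ^{p×q}, E ∈ ℝ^{q×q}. Suppose there exist X ∈ ℝ^{n×q} and U ∈ ℝ^{m×q} solving the regulator equations XE = AX + BU + D and 0 = CX + F, and suppose K ∈ ℝ^{m×n} is such that every eigenvalue of A − BK has negative real part. Set L = U + KX. Then for every pair of differentiable functions v : [0,∞) → ℝ^q and x : [0,∞) → ℝ^n satisfying v'(t) = E v(t) and x'(t) = A x(t) + B(−K x(t) + L v(t)) + D v(t) for all t ≥ 0, the tracking error e(t) = C x(t) + F v(t) tends to 0 as t → ∞. -/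
open Matrix Filter Topology

/-- A real square matrix is Hurwitz if every eigenvalue (element of the complex
spectrum) has negative real part. -/
def IsHurwitz {n : ℕ} (M : Matrix (Fin n) (Fin n) ℝ) : Prop :=
  ∀ μ ∈ spectrum ℂ (M.map Complex.ofReal), μ.re < 0

open NormedSpace

attribute [local instance] Matrix.linftyOpNormedAddCommGroup Matrix.linftyOpNormedRing
  Matrix.linftyOpNormedAlgebra

noncomputable def mulVecCLM {𝕜 : Type*} [NontriviallyNormedField 𝕜] [CompleteSpace 𝕜]
    {a b : ℕ} (P : Matrix (Fin a) (Fin b) 𝕜) : (Fin b → 𝕜) →L[𝕜] (Fin a → 𝕜) :=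
  LinearMap.toContinuousLinearMap P.mulVecLin

@[simp] lemma mulVecCLM_apply {𝕜 : Type*} [NontriviallyNormedField 𝕜] [CompleteSpace 𝕜]
    {a b : ℕ} (P : Matrix (Fin a) (Fin b) 𝕜) (w : Fin b → 𝕜) :
    mulVecCLM P w = P.mulVec w := rfl

/-- `P ↦ P *ᵥ w` as a real-linear continuous map on complex matrices. -/
noncomputable def matApply {n : ℕ} (w : Fin n → ℂ) :
    Matrix (Fin n) (Fin n) ℂ →L[ℝ] (Fin n → ℂ) :=
  LinearMap.toContinuousLinearMap
    { toFun := fun P => P.mulVec w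
      map_add' := fun P Q => Matrix.add_mulVec P Q w
      map_smul' := fun r P => by
        ext i
        simp [Matrix.mulVec, dotProduct, Finset.smul_sum, smul_mul_assoc, mul_assoc] }

@[simp] lemma matApply_apply {n : ℕ} (w : Fin n → ℂ) (P : Matrix (Fin n) (Fin n) ℂ) :
    matApply w P = P.mulVec w := rfl

/-- Exp as a real-CLM-valued function for the product rule. -/
noncomputable def matToCLM {n : ℕ} :
    Matrix (Fin n) (Fin n) ℂ →L[ℝ] ((Fin n → ℂ) →L[ℝ] (Fin n → ℂ)) :=
  LinearMap.toContinuousLinearMap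
    { toFun := fun P => (mulVecCLM P).restrictScalars ℝ
      map_add' := fun P Q => by ext w i; simp [Matrix.add_mulVec]
      map_smul' := fun r P => by
        ext w i
        simp [Matrix.mulVec, dotProduct, Finset.smul_sum, smul_mul_assoc, mul_assoc] }

@[simp] lemma matToCLM_apply {n : ℕ} (P : Matrix (Fin n) (Fin n) ℂ) (w : Fin n → ℂ) :
    matToCLM P w = P.mulVec w := rfl

lemma sol_formula {n : ℕ} (M : Matrix (Fin n) (Fin n) ℂ) (ζ : ℝ → Fin n → ℂ)
    (hζ : ∀ t ≥ (0 : ℝ), HasDerivAt ζ (M.mulVec (ζ t)) t) :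
    ∀ t ≥ (0 : ℝ), ζ t = (exp (t • M)).mulVec (ζ 0) := by
  set w : ℝ → Fin n → ℂ := fun t => (exp (t • (-M))).mulVec (ζ t) with hw_def
  have hw : ∀ t ≥ (0 : ℝ), HasDerivAt w 0 t := by
    intro t ht
    have h1 : HasDerivAt (fun u : ℝ => exp (u • (-M))) (exp (t • (-M)) * (-M)) t :=
      hasDerivAt_exp_smul_const (-M) t
    have h2 : HasDerivAt (fun u : ℝ => matToCLM (exp (u • (-M))))
        (matToCLM (exp (t • (-M)) * (-M))) t :=
      matToCLM.hasFDerivAt.comp_hasDerivAt t h1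
    have h3 := h2.clm_apply (hζ t ht)
    have h4 : matToCLM (exp (t • (-M)) * (-M)) (ζ t)
        + matToCLM (exp (t • (-M))) (M.mulVec (ζ t)) = 0 := by
      simp only [matToCLM_apply, ← Matrix.mulVec_mulVec]
      rw [Matrix.neg_mulVec, Matrix.mulVec_neg]
      exact neg_add_cancel ((exp (t • (-M))).mulVec (M.mulVec (ζ t)))
    rw [h4] at h3
    exact h3
  have hconst : ∀ t ≥ (0 : ℝ), w t = w 0 := by
    intro t ht
    rcases eq_or_lt_of_le ht with h | h
    · rw [← h]
    · exact constant_of_has_deriv_right_zero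
        (fun s hs => ((hw s hs.1).continuousAt.continuousWithinAt))
        (fun s hs => (hw s hs.1).hasDerivWithinAt) t (Set.right_mem_Icc.mpr ht)
  intro t ht
  have key : (exp (t • (-M))).mulVec (ζ t) = ζ 0 := by
    have := hconst t ht
    simpa [hw_def, Matrix.one_mulVec] using this
  have hinv : exp (t • M) * exp (t • (-M)) = 1 := by
    rw [← Matrix.exp_add_of_commute]
    · simp
    · exact ((Commute.refl M).neg_right).smul_left t |>.smul_right t
  calc ζ t = (1 : Matrix (Fin n) (Fin n) ℂ).mulVec (ζ t) := by rw [Matrix.one_mulVec]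
    _ = (exp (t • M)).mulVec ((exp (t • (-M))).mulVec (ζ t)) := by
        rw [Matrix.mulVec_mulVec, hinv]
    _ = (exp (t • M)).mulVec (ζ 0) := by rw [key]

lemma term_decay {k : ℕ} {a : ℝ} (ha : a < 0) :
    Tendsto (fun t : ℝ => t ^ k * Real.exp (a * t)) atTop (𝓝 0) := by
  have hb : (0:ℝ) < -a := by linarith
  have h := tendsto_rpow_mul_exp_neg_mul_atTop_nhds_zero (k : ℝ) (-a) hb
  refine h.congr fun t => ?_
  rw [Real.rpow_natCast, neg_neg]

lemma gen_eigen_decay {n : ℕ} (M : Matrix (Fin n) (Fin n) ℂ) (μ : ℂ) (hμ : μ.re < 0)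
    (w : Fin n → ℂ) (K : ℕ)
    (hw : ∀ k, K ≤ k → ((M - μ • 1) ^ k).mulVec w = 0) :
    Tendsto (fun t : ℝ => (exp (t • M)).mulVec w) atTop (𝓝 0) := by
  set N := M - μ • (1 : Matrix (Fin n) (Fin n) ℂ) with hN
  have hfact : ∀ t : ℝ, exp (t • M) = Complex.exp (t • μ) • exp (t • N) := by
    intro t
    have hM : t • M = (t • μ) • (1 : Matrix (Fin n) (Fin n) ℂ) + t • N := by
      rw [hN, smul_sub, smul_assoc]
      abel
    rw [hM, Matrix.exp_add_of_commute _ _ ((Commute.one_left (t • N)).smul_left (t • μ))]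
    have h1 : exp ((t • μ) • (1 : Matrix (Fin n) (Fin n) ℂ))
        = algebraMap ℂ _ (Complex.exp (t • μ)) := by
      rw [← Algebra.algebraMap_eq_smul_one, Complex.exp_eq_exp_ℂ]
      exact (algebraMap_exp_comm (t • μ)).symm
    rw [h1, ← Algebra.smul_def]
  have hser : ∀ t : ℝ, (exp (t • N)).mulVec w
      = ∑ k ∈ Finset.range K, ((k.factorial : ℝ)⁻¹ * t ^ k) • ((N ^ k).mulVec w) := by
    intro t
    have hsum : Summable (fun k : ℕ => ((k.factorial : ℝ)⁻¹) • (t • N) ^ k) :=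
      expSeries_summable' (𝕂 := ℝ) _
    have h1 : (exp (t • N)).mulVec w
        = ∑' k : ℕ, matApply w (((k.factorial : ℝ)⁻¹) • (t • N) ^ k) := by
      rw [← (matApply w).map_tsum hsum, exp_eq_tsum (𝕂 := ℝ)]
      rfl
    rw [h1]
    have h2 : ∀ k : ℕ, matApply w (((k.factorial : ℝ)⁻¹) • (t • N) ^ k)
        = ((k.factorial : ℝ)⁻¹ * t ^ k) • ((N ^ k).mulVec w) := by
      intro k
      rw [_root_.map_smul, smul_pow, _root_.map_smul, matApply_apply, smul_smul]
    simp_rw [h2]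
    refine tsum_eq_sum fun k hk => ?_
    rw [hw k (by simpa using hk), smul_zero]
  have heq : ∀ t : ℝ, (exp (t • M)).mulVec w
      = ∑ k ∈ Finset.range K,
          Complex.exp (t • μ) • (((k.factorial : ℝ)⁻¹ * t ^ k) • ((N ^ k).mulVec w)) := by
    intro t
    rw [hfact, Matrix.smul_mulVec, hser, Finset.smul_sum]
  rw [show (0 : Fin n → ℂ) = ∑ k ∈ Finset.range K, (0 : Fin n → ℂ) by simp]
  simp_rw [funext heq]
  refine tendsto_finset_sum _ fun k _ => ?_
  set y := (N ^ k).mulVec w with hy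
  have hg : Tendsto (fun t : ℝ => ((k.factorial : ℝ)⁻¹ * ‖y‖) * (t ^ k * Real.exp (μ.re * t)))
      atTop (𝓝 0) := by
    simpa using (term_decay (k := k) hμ).const_mul ((k.factorial : ℝ)⁻¹ * ‖y‖)
  refine squeeze_zero_norm' ?_ hg
  filter_upwards [eventually_ge_atTop (0 : ℝ)] with t ht
  have h1 : ‖Complex.exp (t • μ) • (((k.factorial : ℝ)⁻¹ * t ^ k) • y)‖
      = Real.exp (μ.re * t) * (((k.factorial : ℝ)⁻¹ * t ^ k) * ‖y‖) := by
    rw [norm_smul, norm_smul, Complex.norm_exp]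
    have : (t • μ).re = μ.re * t := by
      simp [Complex.real_smul]
      ring
    rw [this, Real.norm_eq_abs, abs_of_nonneg (by positivity)]
  rw [h1]
  exact le_of_eq (by ring)

lemma hurwitz_decay {n : ℕ} (M : Matrix (Fin n) (Fin n) ℂ)
    (hM : ∀ μ ∈ spectrum ℂ M, μ.re < 0) (c : Fin n → ℂ) :
    Tendsto (fun t : ℝ => (exp (t • M)).mulVec c) atTop (𝓝 0) := by
  set f : Module.End ℂ (Fin n → ℂ) := Matrix.toLinAlgEquiv' M with hf
  set S : Submodule ℂ (Fin n → ℂ) :=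
    { carrier := {c | Tendsto (fun t : ℝ => (exp (t • M)).mulVec c) atTop (𝓝 0)}
      add_mem' := fun hc hd => by
        simpa [Matrix.mulVec_add] using hc.add hd
      zero_mem' := by
        simpa [Matrix.mulVec_zero] using tendsto_const_nhds
      smul_mem' := fun a c hc => by
        simpa [Matrix.mulVec_smul] using hc.const_smul a } with hS
  suffices hc : c ∈ S from hc
  have htop := Module.End.iSup_maxGenEigenspace_eq_top f
  have hle : ∀ μ : ℂ, f.maxGenEigenspace μ ≤ S := by
    intro μ w hw
    rcases (Module.End.mem_maxGenEigenspace f μ w).mp hw with ⟨K, hK⟩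
    by_cases hw0 : w = 0
    · rw [hw0]; exact S.zero_mem
    · have hμ : μ.re < 0 := by
        apply hM
        rw [← AlgEquiv.spectrum_eq (Matrix.toLinAlgEquiv' (R := ℂ)) M]
        refine Module.End.HasEigenvalue.mem_spectrum ?_
        refine Module.End.hasEigenvalue_of_hasGenEigenvalue (k := K) ?_
        rw [Module.End.hasGenEigenvalue_iff]
        intro hbot
        refine hw0 ?_
        have hmem : w ∈ f.genEigenspace μ (K : ℕ) :=
          Module.End.mem_genEigenspace_nat.mpr (by simpa using hK)
        rw [hbot] at hmem
        simpa using hmem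
      have hvan : ∀ k, K ≤ k → ((M - μ • 1) ^ k).mulVec w = 0 := by
        intro k hk
        have hcast : ((M - μ • 1) ^ k).mulVec w = ((f - μ • 1) ^ k) w := by
          have : Matrix.toLinAlgEquiv' ((M - μ • (1 : Matrix (Fin n) (Fin n) ℂ)) ^ k)
              = (f - μ • 1) ^ k := by
            rw [map_pow, map_sub, _root_.map_smul, _root_.map_one]
          rw [← this]
          rfl
        rw [hcast, show k = (k - K) + K from (Nat.sub_add_cancel hk).symm, pow_add,
          Module.End.mul_apply, hK, map_zero]
      exact gen_eigen_decay M μ hμ w K hvan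
  have : (⊤ : Submodule ℂ (Fin n → ℂ)) ≤ S := htop ▸ iSup_le hle
  exact this Submodule.mem_top

/-- If `(X, U)` solves the regulator equations and `A - BK` is Hurwitz, then the
control law `u = -Kx + Lv` with `L = U + KX` solves the output regulation problem:
along every closed-loop trajectory the tracking error `e = Cx + Fv` tends to `0`. -/
theorem statement0 {n m p q : ℕ}
    (A : Matrix (Fin n) (Fin n) ℝ) (B : Matrix (Fin n) (Fin m) ℝ)
    (D : Matrix (Fin n) (Fin q) ℝ) (C : Matrix (Fin p) (Fin n) ℝ)
    (F : Matrix (Fin p) (Fin q) ℝ) (E : Matrix (Fin q) (Fin q) ℝ)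
    (X : Matrix (Fin n) (Fin q) ℝ) (U : Matrix (Fin m) (Fin q) ℝ)
    (hreg1 : X * E = A * X + B * U + D) (hreg2 : C * X + F = 0)
    (K : Matrix (Fin m) (Fin n) ℝ) (hK : IsHurwitz (A - B * K))
    (L : Matrix (Fin m) (Fin q) ℝ) (hL : L = U + K * X)
    (v : ℝ → Fin q → ℝ) (x : ℝ → Fin n → ℝ)
    (hv : ∀ t ≥ (0 : ℝ), HasDerivAt v (E.mulVec (v t)) t)
    (hx : ∀ t ≥ (0 : ℝ), HasDerivAt x
      (A.mulVec (x t) + B.mulVec (-(K.mulVec (x t)) + L.mulVec (v t)) + D.mulVec (v t)) t) :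
    Tendsto (fun t => C.mulVec (x t) + F.mulVec (v t)) atTop (𝓝 0) := by
  set Mr : Matrix (Fin n) (Fin n) ℝ := A - B * K with hMr
  set z : ℝ → Fin n → ℝ := fun t => x t - X.mulVec (v t) with hz_def
  have hz : ∀ t ≥ (0 : ℝ), HasDerivAt z (Mr.mulVec (z t)) t := by
    intro t ht
    have hXv : HasDerivAt (fun t => (mulVecCLM X) (v t)) ((mulVecCLM X) (E.mulVec (v t))) t :=
      (mulVecCLM X).hasFDerivAt.comp_hasDerivAt t (hv t ht)
    have h := (hx t ht).sub hXv
    simp only [mulVecCLM_apply] at h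
    have key : A.mulVec (x t) + B.mulVec (-(K.mulVec (x t)) + L.mulVec (v t)) + D.mulVec (v t)
        - X.mulVec (E.mulVec (v t)) = Mr.mulVec (z t) := by
      have hmul : Mr * X = X * E - (B * L + D) := by
        rw [hMr, hL, hreg1, Matrix.sub_mul, Matrix.mul_add, ← Matrix.mul_assoc]
        abel
      have expand : Mr.mulVec (z t) = Mr.mulVec (x t) - (Mr * X).mulVec (v t) := by
        rw [hz_def, Matrix.mulVec_sub, Matrix.mulVec_mulVec]
      rw [expand, hmul, hMr]
      simp only [Matrix.sub_mulVec, Matrix.add_mulVec, Matrix.mulVec_add, Matrix.mulVec_neg,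
        ← Matrix.mulVec_mulVec]
      abel
    exact key ▸ h
  set Mc : Matrix (Fin n) (Fin n) ℂ := Mr.map Complex.ofReal with hMc
  set ζ : ℝ → Fin n → ℂ := fun t i => (z t i : ℂ) with hζ_def
  have hζ : ∀ t ≥ (0 : ℝ), HasDerivAt ζ (Mc.mulVec (ζ t)) t := by
    intro t ht
    rw [hasDerivAt_pi]
    intro i
    have hi : HasDerivAt (fun t => z t i) (Mr.mulVec (z t) i) t := hasDerivAt_pi.mp (hz t ht) i
    have hcomp := Complex.ofRealCLM.hasFDerivAt.comp_hasDerivAt t hi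
    convert hcomp using 1
    · rfl
    simp only [hMc, hζ_def, Matrix.mulVec, dotProduct, Matrix.map_apply,
      Complex.ofRealCLM_apply]
    push_cast
    rfl
  have hζ0 : Tendsto ζ atTop (𝓝 0) := by
    refine Tendsto.congr' ?_ (hurwitz_decay Mc hK (ζ 0))
    filter_upwards [eventually_ge_atTop (0 : ℝ)] with t ht
    exact (sol_formula Mc ζ hζ t ht).symm
  have hztend : Tendsto z atTop (𝓝 0) := by
    rw [tendsto_pi_nhds]
    intro i
    have := (Complex.continuous_re.tendsto _).comp (tendsto_pi_nhds.mp hζ0 i)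
    simpa [hζ_def, Function.comp_def] using this
  have hCz : (fun t => C.mulVec (x t) + F.mulVec (v t)) = fun t => C.mulVec (z t) := by
    funext t
    have hCX : C * X = -F := eq_neg_of_add_eq_zero_left hreg2
    rw [hz_def, Matrix.mulVec_sub, Matrix.mulVec_mulVec, hCX, Matrix.neg_mulVec]
    abel
  rw [hCz]
  have := ((mulVecCLM C).continuous.tendsto 0).comp hztend
  simpa [Function.comp_def] using this
end

section
/- Let A ∈ ℝ^{n×n}, B ∈ ℝ^{n×m}, D ∈ ℝ^{n×q}, C ∈ ℝ^{p×n} of full row rank, F ∈ ℝ^{p×q}, E ∈ ℝ^{q×q}, and h = (n−p)q. Let X_1 ∈ ℝ^{n×q} satisfy C X_1 + F = 0 and let X_2, …, X_{h+1} form a basis of {X ∈ ℝ^{n×q} : CX = 0}. Define the Sylvester map S(X) = XE − AX. Let P ∈ ℝ^{n×n} be symmetric positive definite, R ∈ ℝ^{m×m} symmetric positive definite, and K' = R^{−1} B^T P (so that P^{−1} K'^T R = B). Define 𝒜 = [𝒜_1, 𝒜_2] with 𝒜_1 = [[vec(S(X_2)), …, vec(S(X_{h+1}))]; [vec(X_2),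 …, vec(X_{h+1})]], 𝒜_2 = [[0, −I_q ⊗ (P^{−1} K'^T R)]; [−I_{nq}, 0]], and b = [vec(D − S(X_1)); −vec(X_1)]. Then a vector χ = (α_2, …, α_{h+1}, vec(X)^T, vec(U)^T)^T satisfies 𝒜 χ = b if and only if X = X_1 + Σ_{i=2}^{h+1} α_i X_i and S(X) = BU + D; consequently every such χ yields a pair (X, U) solving the regulator equations XE = AX + BU + D, 0 = CX + F. -/
open Matrix

open scoped Kronecker BigOperators

def vecM {a b : ℕ} (M : Matrix (Fin a) (Fin b) ℝ) : Fin b × Fin a → ℝ :=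
  fun jc => M jc.2 jc.1

lemma vecM_inj {a b : ℕ} {M N : Matrix (Fin a) (Fin b) ℝ} :
    vecM M = vecM N ↔ M = N := by
  constructor
  · intro h; ext i j; exact congrFun h (j, i)
  · rintro rfl; rfl

lemma kron_one_mulVec {n m q : ℕ} (M : Matrix (Fin n) (Fin m) ℝ)
    (U : Matrix (Fin m) (Fin q) ℝ) :
    ((1 : Matrix (Fin q) (Fin q) ℝ) ⊗ₖ M) *ᵥ vecM U = vecM (M * U) := by
  funext jc
  obtain ⟨j, i⟩ := jc
  simp [mulVec, dotProduct, vecM, Matrix.mul_apply, Fintype.sum_prod_type,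
    Matrix.one_apply, ite_mul, Finset.mul_sum]

lemma colmat_mulVec {n q h : ℕ} (M : Fin h → Matrix (Fin n) (Fin q) ℝ)
    (α : Fin h → ℝ) :
    (Matrix.of fun r i => vecM (M i) r) *ᵥ α = vecM (∑ i, α i • M i) := by
  funext jc
  obtain ⟨j, i⟩ := jc
  simp [mulVec, dotProduct, vecM, Matrix.sum_apply, mul_comm]

/-- The reformulation `𝒜 χ = b` of the regulator equations: with
`𝒜₁ = [[vec S(X₂), …]; [vec X₂, …]]`, `𝒜₂ = [[0, −I_q ⊗ (P⁻¹K'ᵀR)]; [−I_{nq}, 0]]`,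
`b = [vec(D − S(X₁)); −vec X₁]` and `K' = R⁻¹BᵀP` (so `P⁻¹K'ᵀR = B`), a vector
`χ = (α, vec X, vec U)` satisfies `𝒜 χ = b` iff `X = X₁ + Σ αᵢ Xᵢ` and
`S(X) = XE − AX = BU + D`; consequently every such `χ` yields a solution of the
regulator equations. -/
theorem statement5 {n m p q : ℕ}
    (A : Matrix (Fin n) (Fin n) ℝ) (B : Matrix (Fin n) (Fin m) ℝ)
    (D : Matrix (Fin n) (Fin q) ℝ) (C : Matrix (Fin p) (Fin n) ℝ)
    (F : Matrix (Fin p) (Fin q) ℝ) (E : Matrix (Fin q) (Fin q) ℝ)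
    (hC : C.rank = p)
    (X1 : Matrix (Fin n) (Fin q) ℝ) (hX1 : C * X1 + F = 0)
    (Xb : Fin ((n - p) * q) → Matrix (Fin n) (Fin q) ℝ)
    (hXbLI : LinearIndependent ℝ Xb)
    (hXbspan : (Submodule.span ℝ (Set.range Xb) : Set (Matrix (Fin n) (Fin q) ℝ)) =
      {Y : Matrix (Fin n) (Fin q) ℝ | C * Y = 0})
    (P : Matrix (Fin n) (Fin n) ℝ) (hPsym : Pᵀ = P) (hP : P.PosDef)
    (R : Matrix (Fin m) (Fin m) ℝ) (hRsym : Rᵀ = R) (hR : R.PosDef)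
    (K' : Matrix (Fin m) (Fin n) ℝ) (hK' : K' = R⁻¹ * Bᵀ * P)
    (α : Fin ((n - p) * q) → ℝ)
    (X : Matrix (Fin n) (Fin q) ℝ) (U : Matrix (Fin m) (Fin q) ℝ)
    (𝒜 : Matrix ((Fin q × Fin n) ⊕ (Fin q × Fin n))
      (Fin ((n - p) * q) ⊕ ((Fin q × Fin n) ⊕ (Fin q × Fin m))) ℝ)
    (h𝒜 : 𝒜 = Matrix.fromBlocks
      (Matrix.of fun r i => vecM (Xb i * E - A * Xb i) r)
      (Matrix.fromCols (0 : Matrix (Fin q × Fin n) (Fin q × Fin n) ℝ)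
        (-((1 : Matrix (Fin q) (Fin q) ℝ) ⊗ₖ (P⁻¹ * K'ᵀ * R))))
      (Matrix.of fun r i => vecM (Xb i) r)
      (Matrix.fromCols (-1 : Matrix (Fin q × Fin n) (Fin q × Fin n) ℝ)
        (0 : Matrix (Fin q × Fin n) (Fin q × Fin m) ℝ)))
    (χ : Fin ((n - p) * q) ⊕ ((Fin q × Fin n) ⊕ (Fin q × Fin m)) → ℝ)
    (hχ : χ = Sum.elim α (Sum.elim (vecM X) (vecM U)))
    (bv : (Fin q × Fin n) ⊕ (Fin q × Fin n) → ℝ)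
    (hbv : bv = Sum.elim (vecM (D - (X1 * E - A * X1))) (-(vecM X1))) :
    (𝒜 *ᵥ χ = bv ↔
      (X = X1 + ∑ i, α i • Xb i ∧ X * E - A * X = B * U + D)) ∧
    (𝒜 *ᵥ χ = bv → (X * E = A * X + B * U + D ∧ C * X + F = 0)) := by
  have hPdet : IsUnit P.det := isUnit_iff_ne_zero.2 hP.det_pos.ne'
  have hRdet : IsUnit R.det := isUnit_iff_ne_zero.2 hR.det_pos.ne'
  have hB : P⁻¹ * K'ᵀ * R = B := by
    subst hK'
    rw [transpose_mul, transpose_mul, transpose_nonsing_inv, hRsym, hPsym,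
      transpose_transpose]
    rw [← Matrix.mul_assoc P⁻¹ P, nonsing_inv_mul P hPdet, Matrix.one_mul,
      Matrix.mul_assoc, nonsing_inv_mul R hRdet, Matrix.mul_one]
  set Y := ∑ i, α i • Xb i with hY
  have hSY : ∑ i, α i • (Xb i * E - A * Xb i) = Y * E - A * Y := by
    rw [hY, Matrix.sum_mul, Matrix.mul_sum]
    rw [← Finset.sum_sub_distrib]
    congr 1; funext i
    rw [smul_sub, Matrix.smul_mul, Matrix.mul_smul]
  have key : 𝒜 *ᵥ χ = Sum.elim (vecM (Y * E - A * Y) - vecM (B * U)) (vecM Y - vecM X) := by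
    rw [h𝒜, hχ, fromBlocks_mulVec]
    have h1 : (Sum.elim α (Sum.elim (vecM X) (vecM U))) ∘ Sum.inl = α := rfl
    have h2 : (Sum.elim α (Sum.elim (vecM X) (vecM U))) ∘ Sum.inr
        = Sum.elim (vecM X) (vecM U) := rfl
    rw [h1, h2, fromCols_mulVec_sumElim, fromCols_mulVec_sumElim,
      colmat_mulVec, colmat_mulVec, hSY]
    simp only [zero_mulVec, neg_mulVec, kron_one_mulVec, hB, one_mulVec, zero_add, add_zero]
    funext r
    cases r <;> simp [sub_eq_add_neg, ← hY]
  have hbv' : 𝒜 *ᵥ χ = bv ↔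
      (Y * E - A * Y - B * U = D - (X1 * E - A * X1) ∧ Y - X = -X1) := by
    rw [key, hbv]
    constructor
    · intro h
      constructor
      · apply vecM_inj.mp
        funext r
        have := congrFun h (Sum.inl r)
        simpa [vecM, Pi.sub_apply] using this
      · apply vecM_inj.mp
        funext r
        have := congrFun h (Sum.inr r)
        simpa [vecM, Pi.sub_apply] using this
    · rintro ⟨h1, h2⟩
      funext r
      cases r with
      | inl r =>
        have := congrFun (vecM_inj.mpr h1) r
        simpa [vecM] using this
      | inr r =>
        have := congrFun (vecM_inj.mpr h2) r
        simpa [vecM] using this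
  have main : 𝒜 *ᵥ χ = bv ↔ (X = X1 + Y ∧ X * E - A * X = B * U + D) := by
    rw [hbv']
    constructor
    · rintro ⟨h1, h2⟩
      have hX : X = X1 + Y := by
        have := sub_eq_iff_eq_add.mp h2
        rw [this]; abel
      refine ⟨hX, ?_⟩
      rw [hX, Matrix.add_mul, Matrix.mul_add]
      rw [sub_eq_iff_eq_add] at h1
      rw [show X1 * E + Y * E - (A * X1 + A * Y)
          = X1 * E - A * X1 + (Y * E - A * Y) from by abel, h1]
      abel
    · rintro ⟨hX, h2⟩
      have hYX : Y = X - X1 := by rw [hX]; abel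
      constructor
      · rw [hYX, Matrix.sub_mul, Matrix.mul_sub]
        rw [sub_eq_iff_eq_add] at h2
        rw [h2]; abel
      · rw [hYX, hX]; abel
  refine ⟨main, ?_⟩
  intro h
  obtain ⟨hX, h2⟩ := main.mp h
  constructor
  · rw [sub_eq_iff_eq_add] at h2
    rw [h2]; abel
  · have hCXb : ∀ i, C * Xb i = 0 := by
      intro i
      have hi : Xb i ∈ (Submodule.span ℝ (Set.range Xb) : Set (Matrix (Fin n) (Fin q) ℝ)) :=
        Submodule.subset_span (Set.mem_range_self i)
      rw [hXbspan] at hi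
      exact hi
    have hCY : C * Y = 0 := by
      rw [hY, Matrix.mul_sum]
      refine Finset.sum_eq_zero fun i _ => ?_
      rw [Matrix.mul_smul, hCXb i, smul_zero]
    rw [hX, Matrix.mul_add, hCY, add_zero, hX1]
end

section
/- Let A ∈ ℝ^{n×n}, B ∈ ℝ^{n×m}, D ∈ ℝ^{n×q}, C ∈ ℝ^{p×n}, E ∈ ℝ^{q×q}, Q ∈ ℝ^{p×p} symmetric positive semidefinite, and R ∈ ℝ^{m×m} symmetric positive definite. Let K ∈ ℝ^{m×n}, set A_K = A − BK, and suppose P ∈ ℝ^{n×n} is symmetric and solves the Lyapunov equation A_K^T P + P A_K + C^T Q C + K^T R K = 0; let K' = R^{−1} B^T P. Fix X_i ∈ ℝ^{n×q} and let S(X_i) = X_i E − A X_i. Let v : ℝ → ℝ^q and x : ℝ → ℝ^n be differentiable and u : ℝ → ℝ^m be continuous with v' = Ev and x' = Ax + Bu + Dv, and set x̄(τ) = x(τ) − X_i v(τ). Then for all t ∈ ℝ and δt > 0: x̄(t+δt)^T P x̄(t+δt) − x̄(t)^T P x̄(t) = ∫_t^{t+δt} [ −x̄(τ)^T (C^T Q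 C + K^T R K) x̄(τ) + 2 (u(τ) + K x̄(τ))^T R K' x̄(τ) + 2 v(τ)^T (D − S(X_i))^T P x̄(τ) ] dτ. -/
open Matrix intervalIntegral

private lemma hasDerivAt_mulVec' {k l : ℕ} (M : Matrix (Fin k) (Fin l) ℝ)
    {f : ℝ → Fin l → ℝ} {f' : Fin l → ℝ} {τ : ℝ} (hf : HasDerivAt f f' τ) :
    HasDerivAt (fun t => M.mulVec (f t)) (M.mulVec f') τ := by
  rw [hasDerivAt_pi] at hf ⊢
  intro i
  simp only [Matrix.mulVec, dotProduct]
  exact HasDerivAt.fun_sum fun j _ => (hf j).const_mul _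

private lemma hasDerivAt_dot' {k : ℕ} {f g : ℝ → Fin k → ℝ} {f' g' : Fin k → ℝ} {τ : ℝ}
    (hf : HasDerivAt f f' τ) (hg : HasDerivAt g g' τ) :
    HasDerivAt (fun t => f t ⬝ᵥ g t) (f' ⬝ᵥ g τ + f τ ⬝ᵥ g') τ := by
  simp only [dotProduct]
  rw [← Finset.sum_add_distrib]
  exact HasDerivAt.fun_sum fun i _ =>
    ((hasDerivAt_pi.1 hf i).mul (hasDerivAt_pi.1 hg i))

private lemma cont_mulVec' {k l : ℕ} (M : Matrix (Fin k) (Fin l) ℝ)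
    {f : ℝ → Fin l → ℝ} (hf : Continuous f) :
    Continuous fun t => M.mulVec (f t) := by
  refine continuous_pi fun i => ?_
  simp only [Matrix.mulVec, dotProduct]
  exact continuous_finset_sum _ fun j _ => continuous_const.mul ((continuous_apply j).comp hf)

private lemma cont_dot' {k : ℕ} {f g : ℝ → Fin k → ℝ} (hf : Continuous f) (hg : Continuous g) :
    Continuous fun t => f t ⬝ᵥ g t := by
  simp only [dotProduct]
  exact continuous_finset_sum _ fun i _ =>
    ((continuous_apply i).comp hf).mul ((continuous_apply i).comp hg)

private lemma mulVec_dot' {k l : ℕ} (M : Matrix (Fin k) (Fin l) ℝ) (a : Fin l → ℝ)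
    (b : Fin k → ℝ) : M.mulVec a ⬝ᵥ b = a ⬝ᵥ Mᵀ.mulVec b := by
  simp only [Matrix.mulVec, dotProduct, Matrix.transpose_apply,
    Finset.sum_mul, Finset.mul_sum]
  rw [Finset.sum_comm]
  congr 1; ext i; congr 1; ext j; ring

/-- The integral reinforcement-learning identity: if `P` is symmetric and solves the
Lyapunov equation `A_Kᵀ P + P A_K + CᵀQC + KᵀRK = 0` with `A_K = A - BK`, and
`K' = R⁻¹BᵀP`, then along any trajectory of `x' = Ax + Bu + Dv`, `v' = Ev`, with
`x̄ = x - Xᵢ v` and `S(Xᵢ) = XᵢE - AXᵢ`,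
`|x̄(t+δt)|_P - |x̄(t)|_P = ∫_t^{t+δt} [ -|x̄|_{CᵀQC+KᵀRK} + 2(u + Kx̄)ᵀRK'x̄
  + 2vᵀ(D - S(Xᵢ))ᵀPx̄ ] dτ`. -/
theorem statement6 {n m p q : ℕ}
    (A : Matrix (Fin n) (Fin n) ℝ) (B : Matrix (Fin n) (Fin m) ℝ)
    (D : Matrix (Fin n) (Fin q) ℝ) (C : Matrix (Fin p) (Fin n) ℝ)
    (E : Matrix (Fin q) (Fin q) ℝ)
    (Q : Matrix (Fin p) (Fin p) ℝ) (hQsym : Qᵀ = Q) (hQ : Q.PosSemidef)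
    (R : Matrix (Fin m) (Fin m) ℝ) (hRsym : Rᵀ = R) (hR : R.PosDef)
    (K : Matrix (Fin m) (Fin n) ℝ)
    (AK : Matrix (Fin n) (Fin n) ℝ) (hAK : AK = A - B * K)
    (P : Matrix (Fin n) (Fin n) ℝ) (hPsym : Pᵀ = P)
    (hLyap : AKᵀ * P + P * AK + Cᵀ * Q * C + Kᵀ * R * K = 0)
    (K' : Matrix (Fin m) (Fin n) ℝ) (hK' : K' = R⁻¹ * Bᵀ * P)
    (Xi : Matrix (Fin n) (Fin q) ℝ)
    (SXi : Matrix (Fin n) (Fin q) ℝ) (hSXi : SXi = Xi * E - A * Xi)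
    (v : ℝ → Fin q → ℝ) (x : ℝ → Fin n → ℝ) (u : ℝ → Fin m → ℝ)
    (hu : Continuous u)
    (hv : ∀ τ : ℝ, HasDerivAt v (E.mulVec (v τ)) τ)
    (hx : ∀ τ : ℝ, HasDerivAt x
      (A.mulVec (x τ) + B.mulVec (u τ) + D.mulVec (v τ)) τ)
    (xbar : ℝ → Fin n → ℝ) (hxbar : ∀ τ, xbar τ = x τ - Xi.mulVec (v τ)) :
    ∀ (t δt : ℝ), 0 < δt →
      xbar (t + δt) ⬝ᵥ P.mulVec (xbar (t + δt)) - xbar t ⬝ᵥ P.mulVec (xbar t) =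
      ∫ τ in t..(t + δt),
        (-(xbar τ ⬝ᵥ (Cᵀ * Q * C + Kᵀ * R * K).mulVec (xbar τ))
          + 2 * ((u τ + K.mulVec (xbar τ)) ⬝ᵥ (R * K').mulVec (xbar τ))
          + 2 * (v τ ⬝ᵥ ((D - SXi)ᵀ * P).mulVec (xbar τ))) := by
  intro t δt hδt
  -- R * K' = Bᵀ * P
  have hRK' : R * K' = Bᵀ * P := by
    rw [hK', ← Matrix.mul_assoc, ← Matrix.mul_assoc,
      Matrix.mul_nonsing_inv R hR.det_pos.ne'.isUnit, Matrix.one_mul]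
  -- basic continuity facts
  have hvc : Continuous v := continuous_iff_continuousAt.2 fun τ => (hv τ).continuousAt
  have hxc : Continuous x := continuous_iff_continuousAt.2 fun τ => (hx τ).continuousAt
  have hxbar_eq : xbar = fun τ => x τ - Xi.mulVec (v τ) := funext hxbar
  have hxbarc : Continuous xbar := by
    rw [hxbar_eq]; exact hxc.sub (cont_mulVec' Xi hvc)
  -- derivative of xbar
  set w' : ℝ → Fin n → ℝ := fun τ =>
    AK.mulVec (xbar τ) + B.mulVec (u τ + K.mulVec (xbar τ)) + (D - SXi).mulVec (v τ) with hw'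
  have hxbar' : ∀ τ, HasDerivAt xbar (w' τ) τ := by
    intro τ
    have h1 : HasDerivAt xbar
        (A.mulVec (x τ) + B.mulVec (u τ) + D.mulVec (v τ) - Xi.mulVec (E.mulVec (v τ))) τ := by
      rw [hxbar_eq]
      exact ((hx τ).sub (hasDerivAt_mulVec' Xi (hv τ)))
    convert h1 using 1
    simp only [hw', hAK, hSXi, hxbar τ, Matrix.sub_mulVec, Matrix.add_mulVec,
      Matrix.mulVec_add, Matrix.mulVec_sub, Matrix.mulVec_mulVec]
    abel
  -- symmetry of the quadratic form
  have symm_dot : ∀ a b : Fin n → ℝ, a ⬝ᵥ P.mulVec b = b ⬝ᵥ P.mulVec a := by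
    intro a b
    rw [dotProduct_comm, mulVec_dot' P b a, hPsym]
  have quad_transpose : ∀ (M : Matrix (Fin n) (Fin n) ℝ) (a : Fin n → ℝ),
      a ⬝ᵥ M.mulVec a = a ⬝ᵥ Mᵀ.mulVec a := by
    intro M a
    rw [← mulVec_dot', dotProduct_comm]
  -- Lyapunov rearranged
  have hLyap' : AKᵀ * P + P * AK = -(Cᵀ * Q * C + Kᵀ * R * K) := by
    have h : AKᵀ * P + P * AK + (Cᵀ * Q * C + Kᵀ * R * K) = 0 := by
      rw [← hLyap]; abel
    linear_combination (norm := abel) h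
  -- the derivative of the quadratic form equals the integrand
  have key : ∀ τ, HasDerivAt (fun s => xbar s ⬝ᵥ P.mulVec (xbar s))
      (-(xbar τ ⬝ᵥ (Cᵀ * Q * C + Kᵀ * R * K).mulVec (xbar τ))
        + 2 * ((u τ + K.mulVec (xbar τ)) ⬝ᵥ (R * K').mulVec (xbar τ))
        + 2 * (v τ ⬝ᵥ ((D - SXi)ᵀ * P).mulVec (xbar τ))) τ := by
    intro τ
    have hd := hasDerivAt_dot' (hxbar' τ) (hasDerivAt_mulVec' P (hxbar' τ))
    convert hd using 1
    have e2 : xbar τ ⬝ᵥ P.mulVec (w' τ) = w' τ ⬝ᵥ P.mulVec (xbar τ) := symm_dot _ _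
    have e1 : w' τ ⬝ᵥ P.mulVec (xbar τ) =
        xbar τ ⬝ᵥ (AKᵀ * P).mulVec (xbar τ)
        + (u τ + K.mulVec (xbar τ)) ⬝ᵥ (Bᵀ * P).mulVec (xbar τ)
        + v τ ⬝ᵥ ((D - SXi)ᵀ * P).mulVec (xbar τ) := by
      simp only [hw', add_dotProduct, mulVec_dot', Matrix.mulVec_mulVec]
    have e3 : xbar τ ⬝ᵥ (AKᵀ * P).mulVec (xbar τ) + xbar τ ⬝ᵥ (AKᵀ * P).mulVec (xbar τ)
        = -(xbar τ ⬝ᵥ (Cᵀ * Q * C + Kᵀ * R * K).mulVec (xbar τ)) := by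
      nth_rewrite 2 [quad_transpose]
      rw [Matrix.transpose_mul, Matrix.transpose_transpose, hPsym,
        ← dotProduct_add, ← Matrix.add_mulVec, hLyap',
        Matrix.neg_mulVec, dotProduct_neg]
    rw [e2, e1, hRK']
    linarith [e3]
  -- continuity of the integrand
  have hGc : Continuous fun τ =>
      -(xbar τ ⬝ᵥ (Cᵀ * Q * C + Kᵀ * R * K).mulVec (xbar τ))
        + 2 * ((u τ + K.mulVec (xbar τ)) ⬝ᵥ (R * K').mulVec (xbar τ))
        + 2 * (v τ ⬝ᵥ ((D - SXi)ᵀ * P).mulVec (xbar τ)) := by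
    refine Continuous.add (Continuous.add ?_ ?_) ?_
    · exact (cont_dot' hxbarc (cont_mulVec' _ hxbarc)).neg
    · exact continuous_const.mul (cont_dot' (hu.add (cont_mulVec' K hxbarc))
        (cont_mulVec' _ hxbarc))
    · exact continuous_const.mul (cont_dot' hvc (cont_mulVec' _ hxbarc))
  symm
  exact intervalIntegral.integral_eq_sub_of_hasDerivAt
    (fun τ _ => key τ) (hGc.intervalIntegrable _ _)
end

section
/- Let A ∈ ℝ^{n×n}, B ∈ ℝ^{n×m}, C ∈ ℝ^{p×n}, Q symmetric positive semidefinite with (A, √Q C) observable, R symmetric positive definite, and assume (A,B) is stabilizable. Let P* be the unique symmetric positive definite solution of A^T P + P A + C^T Q C − P B R^{−1} B^T P = 0 and K* = R^{−1} B^T P*. Let K_0 ∈ ℝ^{m×n} be any matrix such that A − BK_0 is Hurwitz, and for j = 0, 1, 2, … define P_j as the symmetric solution of (A − BK_j)^T P_j + P_j (A − BK_j) + C^T Q C + K_j^T R K_j = 0 and K_{j+1} = R^{−1} B^T P_j. Then for all j ∈ ℕ: (1) A − BK_j is Hurwitz; (2) P* ≤ P_{j+1} ≤ P_j in the Loewner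 order (i.e., P_j − P_{j+1} and P_{j+1} − P* are positive semidefinite); (3) K_j → K* and P_j → P* as j → ∞. -/
open Matrix Filter Topology

/-- The observability matrix `col(H, HA, …, HA^{n-1})` of the pair `(A, H)`. -/
noncomputable def obsMat {n p : ℕ} (A : Matrix (Fin n) (Fin n) ℝ)
    (H : Matrix (Fin p) (Fin n) ℝ) : Matrix (Fin n × Fin p) (Fin n) ℝ :=
  Matrix.of fun kr c => (H * A ^ (kr.1 : ℕ)) kr.2 c

set_option linter.unusedSectionVars false
set_option linter.unusedVariables false
set_option maxHeartbeats 1000000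

open Complex
open scoped ENNReal NNReal ComplexOrder

attribute [local instance] Matrix.linftyOpNormedRing Matrix.linftyOpNormedAlgebra

namespace Kleinman




/-- complexification -/
noncomputable def cx {α β : Type*} (M : Matrix α β ℝ) : Matrix α β ℂ :=
  M.map Complex.ofReal

variable {α β γ : Type*} [Fintype α] [Fintype β] [Fintype γ] [DecidableEq α] [DecidableEq β]
variable {a b c q : ℕ}

@[simp] lemma cx_apply (M : Matrix α β ℝ) (i j) : cx M i j = (M i j : ℂ) := rfl

lemma cx_mul (M : Matrix α β ℝ) (N : Matrix β γ ℝ) :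
    cx (M * N) = cx M * cx N := by
  ext i j
  simp [cx, Matrix.mul_apply]

@[simp] lemma cx_add (M N : Matrix α β ℝ) : cx (M + N) = cx M + cx N := by
  ext i j; simp [cx]

@[simp] lemma cx_sub (M N : Matrix α β ℝ) : cx (M - N) = cx M - cx N := by
  ext i j; simp [cx]

@[simp] lemma cx_zero : cx (0 : Matrix α β ℝ) = 0 := by
  ext i j; simp [cx]

@[simp] lemma cx_one : cx (1 : Matrix α α ℝ) = 1 := by
  ext i j; simp [cx, Matrix.one_apply]; split <;> simp

lemma cx_pow (M : Matrix α α ℝ) (k : ℕ) : cx (M ^ k) = cx M ^ k := by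
  induction k with
  | zero => simp
  | succ k ih => rw [pow_succ, pow_succ, cx_mul, ih]

lemma cx_transpose (M : Matrix α β ℝ) : cx Mᵀ = (cx M)ᵀ := by
  ext i j; simp [cx]

lemma cx_conjTranspose (M : Matrix α β ℝ) : (cx M)ᴴ = cx Mᵀ := by
  ext i j; simp [cx, Matrix.conjTranspose_apply]

lemma cx_det (M : Matrix α α ℝ) : (cx M).det = (M.det : ℂ) := by
  exact (Complex.ofRealHom.map_det M).symm

lemma cx_inj {M N : Matrix α β ℝ} (h : cx M = cx N) : M = N := by
  ext i j
  have := congrArg (fun X => X i j) h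
  simpa [cx] using this

lemma cx_inv {M : Matrix α α ℝ} (h : IsUnit M.det) : cx M⁻¹ = (cx M)⁻¹ := by
  have hdet : IsUnit (cx M).det := by
    rw [cx_det]; exact (isUnit_iff_ne_zero.mpr (by exact_mod_cast h.ne_zero))
  symm
  apply Matrix.inv_eq_right_inv
  rw [← cx_mul, Matrix.mul_nonsing_inv M h, cx_one]



variable {a b q : ℕ}

/-- complexification of a PSD real matrix is PSD -/
lemma cx_posSemidef {M : Matrix α α ℝ} (hM : M.PosSemidef) :
    (cx M).PosSemidef := by
  have hspec := hM.isHermitian.spectral_theorem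
  rw [Unitary.conjStarAlgAut_apply] at hspec
  set U : Matrix α α ℝ := (hM.isHermitian.eigenvectorUnitary : Matrix α α ℝ) with hU
  have hUs : star U = Uᵀ := by ext i j; simp [Matrix.star_apply]
  have hd : cx (diagonal (RCLike.ofReal ∘ hM.isHermitian.eigenvalues)) =
      diagonal (fun i => ((hM.isHermitian.eigenvalues i : ℝ) : ℂ)) := by
    ext i j; by_cases h : i = j <;> simp [cx, diagonal_apply, h]
  have hcx : cx M = cx U * diagonal (fun i => ((hM.isHermitian.eigenvalues i : ℝ) : ℂ))
      * (cx U)ᴴ := by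
    rw [cx_conjTranspose, ← hUs, ← hd, ← cx_mul, ← cx_mul]
    exact congrArg cx hspec
  rw [hcx]
  exact (Matrix.PosSemidef.diagonal (fun i => by
    simpa using hM.eigenvalues_nonneg i)).mul_mul_conjTranspose_same _

/-- complexification of a PD real matrix is PD -/
lemma cx_posDef {M : Matrix α α ℝ} (hM : M.PosDef) :
    (cx M).PosDef := by
  have hpsd := cx_posSemidef hM.posSemidef
  refine Matrix.PosDef.of_dotProduct_mulVec_pos hpsd.1 fun v hv => ?_
  have h1 := hpsd.dotProduct_mulVec_nonneg v
  rcases eq_or_lt_of_le h1 with h2 | h2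
  · exfalso
    have h3 : (cx M) *ᵥ v = 0 := (hpsd.dotProduct_mulVec_zero_iff v).mp h2.symm
    have hdet : (cx M).det ≠ 0 := by
      have : (cx M).det = (M.det : ℂ) := by
        exact (Complex.ofRealHom.map_det M).symm
      rw [this]
      exact_mod_cast hM.det_pos.ne'
    exact hdet (Matrix.exists_mulVec_eq_zero_iff.mp ⟨v, hv, h3⟩)
  · exact h2

/-- the sandwich identity -/
lemma sandwich (G : Matrix β α ℝ) (W : Matrix β β ℝ)
    (v : α → ℂ) :
    star v ⬝ᵥ (cx (Gᵀ * W * G)) *ᵥ v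
      = star (cx G *ᵥ v) ⬝ᵥ (cx W) *ᵥ (cx G *ᵥ v) := by
  rw [cx_mul, cx_mul, cx_transpose, Matrix.star_mulVec,
    show ((cx G)ᵀ) = (cx G)ᴴ from ((cx_conjTranspose G).trans (cx_transpose G)).symm]
  rw [← Matrix.mulVec_mulVec, ← Matrix.mulVec_mulVec, dotProduct_mulVec (star v),
    Matrix.vecMul_conjTranspose, Matrix.mulVec_mulVec, star_star]

/-- self-sandwich -/
lemma sandwich_self (G : Matrix β α ℝ) (v : α → ℂ) :
    star v ⬝ᵥ (cx (Gᵀ * G)) *ᵥ v = star (cx G *ᵥ v) ⬝ᵥ (cx G *ᵥ v) := by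
  have := sandwich G 1 v
  rw [Matrix.mul_one] at this
  rw [this, show cx (1 : Matrix β β ℝ) = 1 by
    ext i j; by_cases h : i = j <;> simp [cx, Matrix.one_apply, h], Matrix.one_mulVec]



lemma algebraMap_mulVec {a : ℕ} (μ : ℂ) (v : Fin a → ℂ) :
    (algebraMap ℂ (Matrix (Fin a) (Fin a) ℂ) μ).mulVec v = μ • v := by
  rw [Algebra.algebraMap_eq_smul_one, Matrix.smul_mulVec, Matrix.one_mulVec]

lemma mem_spectrum_iff_exists {a : ℕ} (M : Matrix (Fin a) (Fin a) ℂ) (μ : ℂ) :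
    μ ∈ spectrum ℂ M ↔ ∃ v ≠ 0, M.mulVec v = μ • v := by
  rw [spectrum.mem_iff, Matrix.isUnit_iff_isUnit_det, isUnit_iff_ne_zero, not_ne_iff,
    ← Matrix.exists_mulVec_eq_zero_iff]
  constructor
  · rintro ⟨v, hv, h⟩
    rw [Matrix.sub_mulVec, algebraMap_mulVec, sub_eq_zero] at h
    exact ⟨v, hv, h.symm⟩
  · rintro ⟨v, hv, h⟩
    refine ⟨v, hv, ?_⟩
    rw [Matrix.sub_mulVec, algebraMap_mulVec, h, sub_self]

/-- real kernel vectors from a complex kernel vector -/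
lemma real_kernel {O : Matrix α β ℝ} {v : β → ℂ}
    (h : cx O *ᵥ v = 0) :
    O *ᵥ (fun i => (v i).re) = 0 ∧ O *ᵥ (fun i => (v i).im) = 0 := by
  have key : ∀ i, (∑ j, (O i j : ℂ) * v j) = 0 := by
    intro i
    have := congrFun h i
    simpa [Matrix.mulVec, dotProduct, cx] using this
  constructor <;> ext i
  · have := congrArg Complex.re (key i)
    simpa [Complex.re_sum, Complex.mul_re, Matrix.mulVec, dotProduct] using this
  · have := congrArg Complex.im (key i)
    simpa [Complex.im_sum, Complex.mul_im, Matrix.mulVec, dotProduct] using this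

/-- nontrivial real kernel forces rank < n -/
lemma rank_lt_of_kernel {O : Matrix α (Fin b) ℝ} {x : Fin b → ℝ}
    (hx : x ≠ 0) (h : O *ᵥ x = 0) : O.rank < b := by
  have hker : x ∈ LinearMap.ker O.mulVecLin := by
    simpa [Matrix.mulVecLin_apply] using h
  have hpos : 0 < Module.finrank ℝ (LinearMap.ker O.mulVecLin) := by
    rw [Module.finrank_pos_iff]
    exact ⟨⟨⟨x, hker⟩, 0, by simpa using hx⟩⟩
  have hsum := LinearMap.finrank_range_add_finrank_ker O.mulVecLin
  have hdom : Module.finrank ℝ (Fin b → ℝ) = b := by simp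
  rw [hdom] at hsum
  have : O.rank = Module.finrank ℝ (LinearMap.range O.mulVecLin) := rfl
  omega

lemma form_left (F X : Matrix α α ℝ) {v : α → ℂ} {μ : ℂ}
    (hv : cx F *ᵥ v = μ • v) :
    star v ⬝ᵥ cx (Fᵀ * X) *ᵥ v = (starRingEnd ℂ) μ * (star v ⬝ᵥ cx X *ᵥ v) := by
  rw [cx_mul, cx_transpose,
    show ((cx F)ᵀ) = (cx F)ᴴ from ((cx_conjTranspose F).trans (cx_transpose F)).symm,
    ← Matrix.mulVec_mulVec, dotProduct_mulVec (star v),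
    Matrix.vecMul_conjTranspose, star_star, hv, star_smul, smul_dotProduct]
  rfl

lemma form_right (X F : Matrix α α ℝ) {v : α → ℂ} {μ : ℂ}
    (hv : cx F *ᵥ v = μ • v) :
    star v ⬝ᵥ cx (X * F) *ᵥ v = μ * (star v ⬝ᵥ cx X *ᵥ v) := by
  rw [cx_mul, ← Matrix.mulVec_mulVec, hv, Matrix.mulVec_smul, dotProduct_smul]
  rfl

lemma hurwitz_step {n m p : ℕ} (A : Matrix (Fin n) (Fin n) ℝ) (B : Matrix (Fin n) (Fin m) ℝ)
    (H : Matrix (Fin p) (Fin n) ℝ) (R : Matrix (Fin m) (Fin m) ℝ) (hR : R.PosDef)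
    (hobs : (obsMat A H).rank = n)
    (X : Matrix (Fin n) (Fin n) ℝ) (hX : X.PosDef)
    (K₁ D : Matrix (Fin m) (Fin n) ℝ)
    (heq : (A - B*K₁)ᵀ*X + X*(A - B*K₁) + Hᵀ*H + K₁ᵀ*R*K₁ + Dᵀ*R*D = 0) :
    IsHurwitz (A - B*K₁) := by
  intro μ hμ
  by_contra hre
  push_neg at hre
  obtain ⟨v, hv0, hv⟩ := (mem_spectrum_iff_exists _ μ).mp hμ
  have hv' : cx (A - B*K₁) *ᵥ v = μ • v := hv
  set xc := star v ⬝ᵥ cx X *ᵥ v with hxc_def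
  set w1 := cx H *ᵥ v with hw1_def
  set w2 := cx K₁ *ᵥ v with hw2_def
  set w3 := cx D *ᵥ v with hw3_def
  have e0 : star v ⬝ᵥ cx ((A - B*K₁)ᵀ*X + X*(A - B*K₁) + Hᵀ*H + K₁ᵀ*R*K₁ + Dᵀ*R*D) *ᵥ v
      = 0 := by rw [heq, cx_zero, Matrix.zero_mulVec, dotProduct_zero]
  have esplit : (starRingEnd ℂ) μ * xc + μ * xc + star w1 ⬝ᵥ w1
      + star w2 ⬝ᵥ cx R *ᵥ w2 + star w3 ⬝ᵥ cx R *ᵥ w3 = 0 := by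
    rw [← form_left (A - B*K₁) X hv', ← form_right X (A - B*K₁) hv',
      hw1_def, ← sandwich_self H v, hw2_def, ← sandwich K₁ R v, hw3_def, ← sandwich D R v]
    rw [← e0, cx_add, cx_add, cx_add, cx_add]
    simp only [Matrix.add_mulVec, dotProduct_add]
  -- positivity facts
  have hxpos : 0 < xc := (cx_posDef hX).dotProduct_mulVec_pos hv0
  have hxre : 0 < xc.re ∧ xc.im = 0 := by
    rwa [Complex.lt_def, Complex.zero_re, Complex.zero_im, eq_comm] at hxpos
  have hs1 : 0 ≤ star w1 ⬝ᵥ w1 := dotProduct_star_self_nonneg w1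
  have hs2 : 0 ≤ star w2 ⬝ᵥ cx R *ᵥ w2 := (cx_posDef hR).posSemidef.dotProduct_mulVec_nonneg w2
  have hs3 : 0 ≤ star w3 ⬝ᵥ cx R *ᵥ w3 := (cx_posDef hR).posSemidef.dotProduct_mulVec_nonneg w3
  have hs1' : 0 ≤ (star w1 ⬝ᵥ w1).re ∧ (star w1 ⬝ᵥ w1).im = 0 := by
    rwa [Complex.le_def, Complex.zero_re, Complex.zero_im, eq_comm] at hs1
  have hs2' : 0 ≤ (star w2 ⬝ᵥ cx R *ᵥ w2).re ∧ (star w2 ⬝ᵥ cx R *ᵥ w2).im = 0 := by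
    rwa [Complex.le_def, Complex.zero_re, Complex.zero_im, eq_comm] at hs2
  have hs3' : 0 ≤ (star w3 ⬝ᵥ cx R *ᵥ w3).re ∧ (star w3 ⬝ᵥ cx R *ᵥ w3).im = 0 := by
    rwa [Complex.le_def, Complex.zero_re, Complex.zero_im, eq_comm] at hs3
  have hconj : (starRingEnd ℂ) μ * xc + μ * xc = ((2 * μ.re : ℝ) : ℂ) * xc := by
    rw [← add_mul]
    congr 1
    rw [add_comm]
    exact_mod_cast Complex.add_conj μ
  rw [hconj] at esplit
  have ere := congrArg Complex.re esplit
  simp only [Complex.add_re, Complex.mul_re, Complex.ofReal_re, Complex.ofReal_im,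
    zero_mul, sub_zero, Complex.zero_re, hxre.2, mul_zero] at ere
  -- each term is zero
  have hterm : 0 ≤ 2 * μ.re * xc.re := mul_nonneg (by linarith) hxre.1.le
  have h1z : (star w1 ⬝ᵥ w1).re = 0 := by linarith [hs1'.1, hs2'.1, hs3'.1]
  have h2z : (star w2 ⬝ᵥ cx R *ᵥ w2).re = 0 := by linarith [hs1'.1, hs2'.1, hs3'.1]
  have hw1z : w1 = 0 := by
    rw [← dotProduct_star_self_eq_zero (v := w1)]
    exact Complex.ext h1z hs1'.2
  have hw2z : w2 = 0 := by
    by_contra hne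
    have := (cx_posDef hR).dotProduct_mulVec_pos hne
    rw [Complex.lt_def, Complex.zero_re] at this
    linarith [this.1]
  -- A v = μ v
  have hAv : cx A *ᵥ v = μ • v := by
    have : cx A = cx (A - B*K₁) + cx B * cx K₁ := by
      rw [← cx_mul, ← cx_add, sub_add_cancel]
    rw [this, Matrix.add_mulVec, hv', ← Matrix.mulVec_mulVec, ← hw2_def, hw2z,
      Matrix.mulVec_zero, add_zero]
  have hpow : ∀ k : ℕ, cx (A ^ k) *ᵥ v = μ ^ k • v := by
    intro k
    induction k with
    | zero => simp [cx]
    | succ k ih =>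
      rw [pow_succ, cx_mul, ← Matrix.mulVec_mulVec, hAv, Matrix.mulVec_smul, ih,
        smul_smul, ← pow_succ']
  have hObs : cx (obsMat A H) *ᵥ v = 0 := by
    ext kr
    have : (cx (obsMat A H) *ᵥ v) kr = (cx (H * A ^ (kr.1 : ℕ)) *ᵥ v) kr.2 := by
      simp [cx, Matrix.mulVec, dotProduct, obsMat]
    rw [this, cx_mul, ← Matrix.mulVec_mulVec, hpow, Matrix.mulVec_smul, ← hw1_def, hw1z]
    simp
  obtain ⟨hre0, him0⟩ := real_kernel hObs
  have hvre : (fun i => (v i).re) ≠ 0 ∨ (fun i => (v i).im) ≠ 0 := by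
    by_contra hcon
    push_neg at hcon
    apply hv0
    ext i
    exact Complex.ext (congrFun hcon.1 i) (congrFun hcon.2 i)
  have : (obsMat A H).rank < n := by
    rcases hvre with h | h
    · exact rank_lt_of_kernel h hre0
    · exact rank_lt_of_kernel h him0
  omega

lemma hurwitz_isUnit_one_sub {Am : Matrix (Fin a) (Fin a) ℝ} (hH : IsHurwitz Am) :
    IsUnit (1 - Am).det := by
  rw [isUnit_iff_ne_zero]
  intro hdet
  have hcdet : (cx (1 - Am)).det = 0 := by rw [cx_det, hdet, Complex.ofReal_zero]
  obtain ⟨v, hv0, hv⟩ := Matrix.exists_mulVec_eq_zero_iff.mpr hcdet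
  have : cx Am *ᵥ v = (1 : ℂ) • v := by
    rw [cx_sub, cx_one, Matrix.sub_mulVec, Matrix.one_mulVec, sub_eq_zero] at hv
    rw [← hv, one_smul]
  have h1 : (1 : ℂ) ∈ spectrum ℂ (cx Am) := (mem_spectrum_iff_exists _ _).mpr ⟨v, hv0, this⟩
  have := hH 1 h1
  norm_num at this

lemma cayley_spectrum {Am : Matrix (Fin a) (Fin a) ℝ} (hH : IsHurwitz Am) :
    ∀ l ∈ spectrum ℂ (cx ((1 + Am) * (1 - Am)⁻¹)), ‖l‖₊ < 1 := by
  intro l hl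
  have hdet := hurwitz_isUnit_one_sub hH
  obtain ⟨w, hw0, hw⟩ := (mem_spectrum_iff_exists _ l).mp hl
  rw [cx_mul, cx_inv hdet] at hw
  set Sc := (cx (1 - Am))⁻¹ with hSc
  have hcdet : IsUnit (cx (1 - Am)).det := by
    rw [cx_det, isUnit_iff_ne_zero]
    exact_mod_cast hdet.ne_zero
  have h1 : cx (1 - Am) * Sc = 1 := Matrix.mul_nonsing_inv _ hcdet
  set v := Sc *ᵥ w with hv_def
  have hwv : w = cx (1 - Am) *ᵥ v := by
    rw [hv_def, Matrix.mulVec_mulVec, h1, Matrix.one_mulVec]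
  have hv0 : v ≠ 0 := by
    intro h
    rw [h, Matrix.mulVec_zero] at hwv
    exact hw0 hwv
  have heig : cx (1 + Am) *ᵥ v = l • (cx (1 - Am) *ᵥ v) := by
    rw [← hwv, ← hw, ← Matrix.mulVec_mulVec, ← hv_def]
  have hexp : (1 + l) • (cx Am *ᵥ v) = (l - 1) • v := by
    rw [cx_add, cx_one, Matrix.add_mulVec, Matrix.one_mulVec,
      cx_sub, cx_one, Matrix.sub_mulVec, Matrix.one_mulVec, smul_sub] at heig
    have hkey : (l - 1) • v - (1 + l) • (cx Am *ᵥ v)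
        = (l • v - l • (cx Am *ᵥ v)) - (v + cx Am *ᵥ v) := by module
    rw [← heig, sub_self] at hkey
    exact (sub_eq_zero.mp hkey).symm
  have hlne : l ≠ -1 := by
    intro h
    rw [h] at hexp
    have hz : ((-1 : ℂ) - 1) • v = 0 := by
      rw [← hexp]
      module
    rcases smul_eq_zero.mp hz with h' | h'
    · norm_num at h'
    · exact hv0 h'
  have h1l : (1 + l) ≠ 0 := fun h => hlne (by linear_combination h)
  set μ := (l - 1) / (l + 1) with hμ
  have heigA : cx Am *ᵥ v = μ • v := by
    have h3 := congrArg (fun z => (1 + l)⁻¹ • z) hexp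
    simp only [smul_smul, inv_mul_cancel₀ h1l, one_smul] at h3
    rw [h3, hμ]
    congr 1
    rw [div_eq_mul_inv, mul_comm, add_comm 1 l]
  have hμmem : μ ∈ spectrum ℂ (cx Am) := (mem_spectrum_iff_exists _ _).mpr ⟨v, hv0, heigA⟩
  have hμre : μ.re < 0 := hH μ hμmem
  have hl1 : l + 1 ≠ 0 := fun h => hlne (by linear_combination h)
  have hnsq : 0 < Complex.normSq (l + 1) := Complex.normSq_pos.mpr hl1
  have hre_eq : μ.re = (Complex.normSq l - 1) / Complex.normSq (l + 1) := by
    rw [hμ, Complex.div_re]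
    rw [Complex.normSq_apply, Complex.normSq_apply]
    simp only [Complex.sub_re, Complex.sub_im, Complex.add_re, Complex.add_im,
      Complex.one_re, Complex.one_im]
    ring_nf
  have hlsq : Complex.normSq l < 1 := by
    rw [hre_eq, div_neg_iff] at hμre
    rcases hμre with ⟨h1', h2'⟩ | ⟨h1', h2'⟩
    · linarith
    · linarith
  have : ‖l‖ < 1 := by
    have h2 : ‖l‖ ^ 2 < 1 := by rwa [Complex.sq_norm]
    nlinarith [norm_nonneg l]
  exact_mod_cast this

/-- if spectrum of `cx T` is inside the unit disc, then `T ^ k *ᵥ x → 0`. -/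
lemma pow_mulVec_tendsto_zero {T : Matrix (Fin a) (Fin a) ℝ}
    (h : ∀ l ∈ spectrum ℂ (cx T), ‖l‖₊ < 1) (x : Fin a → ℝ) :
    Tendsto (fun k : ℕ => T ^ k *ᵥ x) atTop (𝓝 0) := by
  rcases Nat.eq_zero_or_pos a with ha | ha
  · subst ha
    have : (fun k : ℕ => T ^ k *ᵥ x) = fun _ => 0 := by
      funext k; ext i; exact absurd i.2 (by omega)
    rw [this]; exact tendsto_const_nhds
  have : NeZero a := ⟨ha.ne'⟩
  -- Gelfand
  have hρ : spectralRadius ℂ (cx T) < ((1 : ℝ≥0) : ℝ≥0∞) :=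
    spectrum.spectralRadius_lt_of_forall_lt (cx T) h
  obtain ⟨r, hr1, hr2⟩ := ENNReal.lt_iff_exists_nnreal_btwn.mp hρ
  have hr2' : r < 1 := by exact_mod_cast hr2
  have hgel := spectrum.pow_nnnorm_pow_one_div_tendsto_nhds_spectralRadius (cx T)
  have hev : ∀ᶠ k : ℕ in atTop, (‖(cx T) ^ k‖₊ : ℝ≥0∞) ^ (1 / k : ℝ) < (r : ℝ≥0∞) :=
    hgel.eventually_lt_const hr1
  have hnorm : Tendsto (fun k : ℕ => ‖(cx T) ^ k‖) atTop (𝓝 0) := by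
    have hbound : ∀ᶠ k : ℕ in atTop, ‖(cx T) ^ k‖ ≤ (r : ℝ) ^ k := by
      filter_upwards [hev, eventually_ge_atTop 1] with k hk hk1
      have hkpos : (0:ℝ) < (k:ℝ) := by exact_mod_cast hk1
      have hklt : (‖(cx T) ^ k‖₊ : ℝ≥0∞) < (r : ℝ≥0∞) ^ (k : ℝ) := by
        have := ENNReal.rpow_lt_rpow hk hkpos
        rwa [← ENNReal.rpow_mul, one_div, inv_mul_cancel₀ hkpos.ne', ENNReal.rpow_one] at this
      have : (‖(cx T) ^ k‖₊ : ℝ) < (r : ℝ) ^ k := by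
        have h2 : (‖(cx T) ^ k‖₊ : ℝ≥0∞) < ((r ^ k : ℝ≥0) : ℝ≥0∞) := by
          rwa [ENNReal.coe_pow, ← ENNReal.rpow_natCast (r : ℝ≥0∞) k]
        exact_mod_cast h2
      exact this.le
    exact squeeze_zero' (Eventually.of_forall fun k => norm_nonneg _) hbound
      (tendsto_pow_atTop_nhds_zero_of_lt_one r.coe_nonneg (by exact_mod_cast hr2'))
  -- componentwise bound
  have hx : ∀ i, Tendsto (fun k : ℕ => (T ^ k *ᵥ x) i) atTop (𝓝 0) := by
    intro i
    have hb : ∀ k : ℕ, |(T ^ k *ᵥ x) i| ≤ ‖(cx T) ^ k‖ * ‖fun j => ((x j : ℂ))‖ := by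
      intro k
      have hvec : (cx T) ^ k *ᵥ (fun j => ((x j : ℂ))) = fun i' => (((T ^ k *ᵥ x) i' : ℝ) : ℂ) := by
        rw [← cx_pow]
        ext i'
        push_cast [cx, Matrix.mulVec, dotProduct, Matrix.map_apply]
        rfl
      have h1 : ‖(((T ^ k *ᵥ x) i : ℝ) : ℂ)‖ ≤ ‖(cx T) ^ k *ᵥ (fun j => ((x j : ℂ)))‖ := by
        rw [hvec]
        exact norm_le_pi_norm (fun i' => (((T ^ k *ᵥ x) i' : ℝ) : ℂ)) i
      have h2 : ‖(cx T) ^ k *ᵥ (fun j => ((x j : ℂ)))‖ ≤ ‖(cx T) ^ k‖ * ‖fun j => ((x j : ℂ))‖ :=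
        Matrix.linfty_opNorm_mulVec _ _
      simpa [Complex.norm_real] using h1.trans h2
    have := hnorm.mul_const ‖fun j => ((x j : ℂ))‖
    rw [zero_mul] at this
    exact squeeze_zero_norm (by simpa [Real.norm_eq_abs] using hb) this
  rw [tendsto_pi_nhds]
  intro i
  simpa using hx i

lemma dot_sandwich_real {E Y : Matrix (Fin a) (Fin a) ℝ} (y : Fin a → ℝ) :
    (E *ᵥ y) ⬝ᵥ (Y *ᵥ (E *ᵥ y)) = y ⬝ᵥ ((Eᵀ * Y * E) *ᵥ y) := by
  rw [show Eᵀ * Y * E = Eᵀ * (Y * E) by rw [Matrix.mul_assoc], ← Matrix.mulVec_mulVec,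
    dotProduct_mulVec y, Matrix.vecMul_transpose, Matrix.mulVec_mulVec]

/-- real symmetric matrix is Hermitian -/
lemma real_isHermitian {X : Matrix (Fin a) (Fin a) ℝ} (hXs : Xᵀ = X) : X.IsHermitian := by
  have : Xᴴ = Xᵀ := by ext i j; simp [Matrix.conjTranspose_apply]
  rw [Matrix.IsHermitian, this, hXs]

/-- Lyapunov positive semidefiniteness: if `Am` is Hurwitz, `M` PSD and
`Amᵀ X + X Am + M = 0` with `X` symmetric, then `X` is PSD. -/
lemma lyap_psd {Am X M : Matrix (Fin a) (Fin a) ℝ} (hH : IsHurwitz Am)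
    (hXs : Xᵀ = X) (hM : M.PosSemidef) (heq : Amᵀ * X + X * Am + M = 0) :
    X.PosSemidef := by
  refine Matrix.PosSemidef.of_dotProduct_mulVec_nonneg (real_isHermitian hXs) fun x => ?_
  have hdet := hurwitz_isUnit_one_sub hH
  set S := (1 - Am)⁻¹ with hS
  set T := (1 + Am) * S with hT
  set N := Sᵀ * (M + M) * S with hN
  have h1 : (1 - Am) * S = 1 := Matrix.mul_nonsing_inv _ hdet
  have h1t : Sᵀ * (1 - Amᵀ) = 1 := by
    have := congrArg Matrix.transpose h1
    simpa [Matrix.transpose_mul, Matrix.transpose_sub, Matrix.transpose_one] using this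
  -- Stein equation
  have hstein : Tᵀ * X * T = X - N := by
    have hTt : Tᵀ = Sᵀ * (1 + Amᵀ) := by
      rw [hT, Matrix.transpose_mul, Matrix.transpose_add, Matrix.transpose_one]
    have hXrw : X = Sᵀ * ((1 - Amᵀ) * X * (1 - Am)) * S := by
      calc X = (Sᵀ * (1 - Amᵀ)) * X * ((1 - Am) * S) := by
              rw [h1t, h1, Matrix.one_mul, Matrix.mul_one]
        _ = Sᵀ * ((1 - Amᵀ) * X * (1 - Am)) * S := by noncomm_ring
    have hmid : (1 + Amᵀ) * X * (1 + Am) - (1 - Amᵀ) * X * (1 - Am)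
        = (Amᵀ * X + X * Am + M) + (Amᵀ * X + X * Am + M) - (M + M) := by noncomm_ring
    rw [heq] at hmid
    have hmid' : (1 + Amᵀ) * X * (1 + Am) = (1 - Amᵀ) * X * (1 - Am) - (M + M) := by
      rw [sub_eq_iff_eq_add] at hmid
      rw [hmid]
      noncomm_ring
    calc Tᵀ * X * T = Sᵀ * ((1 + Amᵀ) * X * (1 + Am)) * S := by rw [hTt, hT]; noncomm_ring
      _ = Sᵀ * ((1 - Amᵀ) * X * (1 - Am)) * S - Sᵀ * (M + M) * S := by
          rw [hmid']; noncomm_ring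
      _ = X - N := by rw [← hXrw, hN]
  -- quadratic form decreases along T-orbit
  have hNpsd : ∀ y : Fin a → ℝ, 0 ≤ y ⬝ᵥ N *ᵥ y := by
    intro y
    rw [hN, ← dot_sandwich_real]
    have := (hM.add hM).dotProduct_mulVec_nonneg (S *ᵥ y)
    simpa using this
  have hstep : ∀ y : Fin a → ℝ, (T *ᵥ y) ⬝ᵥ X *ᵥ (T *ᵥ y) ≤ y ⬝ᵥ X *ᵥ y := by
    intro y
    rw [dot_sandwich_real, hstein, Matrix.sub_mulVec, dotProduct_sub]
    have := hNpsd y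
    linarith
  have hmono : ∀ k : ℕ, (T ^ k *ᵥ x) ⬝ᵥ X *ᵥ (T ^ k *ᵥ x) ≤ x ⬝ᵥ X *ᵥ x := by
    intro k
    induction k with
    | zero => simp
    | succ k ih =>
      have : T ^ (k+1) *ᵥ x = T *ᵥ (T ^ k *ᵥ x) := by
        rw [Matrix.mulVec_mulVec, ← pow_succ']
      rw [this]
      exact le_trans (hstep _) ih
  -- limit
  have hspec := cayley_spectrum hH
  have htend : Tendsto (fun k : ℕ => T ^ k *ᵥ x) atTop (𝓝 0) := by
    rw [hT, hS]
    exact pow_mulVec_tendsto_zero hspec x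
  have hqcont : Continuous (fun y : Fin a → ℝ => y ⬝ᵥ X *ᵥ y) :=
    continuous_id.dotProduct (continuous_const.matrix_mulVec continuous_id)
  have hqlim : Tendsto (fun k : ℕ => (T ^ k *ᵥ x) ⬝ᵥ X *ᵥ (T ^ k *ᵥ x)) atTop (𝓝 0) := by
    have := (hqcont.tendsto 0).comp htend
    simpa only [Function.comp_def, zero_dotProduct] using this
  have h0le : (0:ℝ) ≤ x ⬝ᵥ X *ᵥ x := le_of_tendsto' hqlim hmono
  simpa using h0le

lemma real_star_vec (x : Fin a → ℝ) : star x = x := by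
  funext i; simp

lemma herm_to_symm {W : Matrix (Fin a) (Fin a) ℝ} (h : W.IsHermitian) : Wᵀ = W := by
  have : Wᴴ = Wᵀ := by ext i j; simp [Matrix.conjTranspose_apply]
  rw [← this, h]

lemma psd_of_forms {X : Matrix (Fin a) (Fin a) ℝ} (hs : Xᵀ = X)
    (h : ∀ x, 0 ≤ x ⬝ᵥ X *ᵥ x) : X.PosSemidef :=
  Matrix.PosSemidef.of_dotProduct_mulVec_nonneg (real_isHermitian hs) fun x => by
    rw [real_star_vec]; exact h x

lemma psd_form {X : Matrix (Fin a) (Fin a) ℝ} (h : X.PosSemidef) (x : Fin a → ℝ) :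
    0 ≤ x ⬝ᵥ X *ᵥ x := by
  have := h.dotProduct_mulVec_nonneg x
  rwa [real_star_vec] at this

lemma dot_sandwich_real' {E : Matrix (Fin b) (Fin a) ℝ} {Y : Matrix (Fin b) (Fin b) ℝ}
    (y : Fin a → ℝ) :
    (E *ᵥ y) ⬝ᵥ (Y *ᵥ (E *ᵥ y)) = y ⬝ᵥ ((Eᵀ * Y * E) *ᵥ y) := by
  rw [show Eᵀ * Y * E = Eᵀ * (Y * E) by rw [Matrix.mul_assoc], ← Matrix.mulVec_mulVec,
    dotProduct_mulVec y, Matrix.vecMul_transpose, Matrix.mulVec_mulVec]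

lemma sandwich_psd_real {G : Matrix (Fin b) (Fin a) ℝ} {W : Matrix (Fin b) (Fin b) ℝ}
    (hW : W.PosSemidef) : (Gᵀ * W * G).PosSemidef := by
  refine psd_of_forms ?_ fun x => ?_
  · rw [Matrix.transpose_mul, Matrix.transpose_mul, Matrix.transpose_transpose,
      herm_to_symm hW.isHermitian, Matrix.mul_assoc]
  · rw [← dot_sandwich_real']
    exact psd_form hW (G *ᵥ x)

lemma psd_antisymm {Δ : Matrix (Fin a) (Fin a) ℝ} (h1 : Δ.PosSemidef)
    (h2 : (-Δ).PosSemidef) : Δ = 0 := by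
  have hz : ∀ x : Fin a → ℝ, Δ *ᵥ x = 0 := by
    intro x
    have ha := psd_form h1 x
    have hb := psd_form h2 x
    rw [Matrix.neg_mulVec, dotProduct_neg] at hb
    have : x ⬝ᵥ Δ *ᵥ x = 0 := le_antisymm (by linarith) ha
    have := (h1.dotProduct_mulVec_zero_iff x).mp (by rwa [real_star_vec])
    exact this
  ext i j
  have := congrFun (hz (Pi.single j 1)) i
  rwa [Matrix.mulVec_single_one] at this

lemma entry_eq_forms {X : Matrix (Fin a) (Fin a) ℝ} (hs : Xᵀ = X) (i k : Fin a) :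
    X i k = ((Pi.single i 1 + Pi.single k 1) ⬝ᵥ X *ᵥ (Pi.single i 1 + Pi.single k 1)
      - Pi.single i 1 ⬝ᵥ X *ᵥ (Pi.single i 1) - Pi.single k 1 ⬝ᵥ X *ᵥ (Pi.single k 1)) / 2 := by
  have hsym : X k i = X i k := by
    have := congrFun (congrFun hs i) k
    simpa [Matrix.transpose_apply] using this
  simp only [add_dotProduct, Matrix.mulVec_add, dotProduct_add,
    Matrix.mulVec_single_one, single_dotProduct, one_mul]
  have h1 : ∀ r c : Fin a, Pi.single (M := fun _ => ℝ) r 1 ⬝ᵥ (fun i' => X i' c) = X r c := by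
    intro r c
    rw [single_dotProduct, one_mul]
  ring_nf
  change X i k = X k i * (1 / 2) + X i k * (1 / 2)
  rw [hsym]
  ring

end Kleinman

open Kleinman

/-- Kleinman's policy iteration: starting from a stabilizing gain `K₀` and iterating
the Lyapunov equation `(A − BKⱼ)ᵀPⱼ + Pⱼ(A − BKⱼ) + CᵀQC + KⱼᵀRKⱼ = 0`,
`K_{j+1} = R⁻¹BᵀPⱼ`, one has for all `j`: (1) `A − BKⱼ` is Hurwitz;
(2) `P* ≤ P_{j+1} ≤ Pⱼ` in the Loewner order; (3) `Kⱼ → K*` and `Pⱼ → P*`. -/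
theorem statement12 {n m p : ℕ}
    (A : Matrix (Fin n) (Fin n) ℝ) (B : Matrix (Fin n) (Fin m) ℝ)
    (C : Matrix (Fin p) (Fin n) ℝ)
    (Q : Matrix (Fin p) (Fin p) ℝ) (hQsym : Qᵀ = Q) (hQ : Q.PosSemidef)
    (R : Matrix (Fin m) (Fin m) ℝ) (hRsym : Rᵀ = R) (hR : R.PosDef)
    (hstab : ∃ K : Matrix (Fin m) (Fin n) ℝ, IsHurwitz (A - B * K))
    (sqrtQ : Matrix (Fin p) (Fin p) ℝ) (hsqrtQ : sqrtQ.PosSemidef)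
    (hsqrtQQ : sqrtQ * sqrtQ = Q)
    (hobs : (obsMat A (sqrtQ * C)).rank = n)
    (Pstar : Matrix (Fin n) (Fin n) ℝ) (hPstarSym : Pstarᵀ = Pstar)
    (hPstarPD : Pstar.PosDef)
    (hPstarRic : Aᵀ * Pstar + Pstar * A + Cᵀ * Q * C
      - Pstar * B * R⁻¹ * Bᵀ * Pstar = 0)
    (Kstar : Matrix (Fin m) (Fin n) ℝ) (hKstar : Kstar = R⁻¹ * Bᵀ * Pstar)
    (K : ℕ → Matrix (Fin m) (Fin n) ℝ) (P : ℕ → Matrix (Fin n) (Fin n) ℝ)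
    (hK0 : IsHurwitz (A - B * K 0))
    (hP : ∀ j : ℕ, (P j)ᵀ = P j ∧
      (A - B * K j)ᵀ * P j + P j * (A - B * K j) + Cᵀ * Q * C + (K j)ᵀ * R * K j = 0)
    (hKsucc : ∀ j : ℕ, K (j + 1) = R⁻¹ * Bᵀ * P j) :
    (∀ j : ℕ, IsHurwitz (A - B * K j)) ∧
    (∀ j : ℕ, (P j - P (j + 1)).PosSemidef ∧ (P (j + 1) - Pstar).PosSemidef) ∧
    Tendsto K atTop (𝓝 Kstar) ∧ Tendsto P atTop (𝓝 Pstar) := by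
  classical
  have hRdet : IsUnit R.det := isUnit_iff_ne_zero.mpr hR.det_pos.ne'
  have hsqrtQsym : sqrtQᵀ = sqrtQ := herm_to_symm hsqrtQ.isHermitian
  have hCQC : Cᵀ * Q * C = (sqrtQ * C)ᵀ * (sqrtQ * C) := by
    rw [Matrix.transpose_mul, hsqrtQsym, ← hsqrtQQ]
    simp [Matrix.mul_assoc]
  have hBtP : ∀ j, Bᵀ * P j = R * K (j+1) := by
    intro j
    rw [hKsucc j, ← Matrix.mul_assoc, ← Matrix.mul_assoc,
      Matrix.mul_nonsing_inv R hRdet, Matrix.one_mul]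
  have hPB : ∀ j, P j * B = (K (j+1))ᵀ * R := by
    intro j
    have := congrArg Matrix.transpose (hBtP j)
    simpa [Matrix.transpose_mul, (hP j).1, hRsym] using this
  have hBtPs : Bᵀ * Pstar = R * Kstar := by
    rw [hKstar, ← Matrix.mul_assoc, ← Matrix.mul_assoc,
      Matrix.mul_nonsing_inv R hRdet, Matrix.one_mul]
  have hPsB : Pstar * B = Kstarᵀ * R := by
    have := congrArg Matrix.transpose hBtPs
    simpa [Matrix.transpose_mul, hPstarSym, hRsym] using this
  -- the closed-loop equation for the optimal gain
  have eqStarQ : (A - B*Kstar)ᵀ*Pstar + Pstar*(A - B*Kstar) + Cᵀ*Q*C + Kstarᵀ*R*Kstar = 0 := by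
    have z1 : R*Kstar - Bᵀ*Pstar = 0 := by rw [hBtPs, sub_self]
    have z2 : Kstar - R⁻¹*Bᵀ*Pstar = 0 := by rw [hKstar, sub_self]
    have iden : (A - B*Kstar)ᵀ*Pstar + Pstar*(A - B*Kstar) + Cᵀ*Q*C + Kstarᵀ*R*Kstar
        = (Aᵀ*Pstar + Pstar*A + Cᵀ*Q*C - Pstar*B*R⁻¹*Bᵀ*Pstar)
          + Kstarᵀ*(R*Kstar - Bᵀ*Pstar) - Pstar*B*(Kstar - R⁻¹*Bᵀ*Pstar) := by
      simp only [Matrix.transpose_sub, Matrix.transpose_mul, Matrix.sub_mul,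
        Matrix.mul_sub, Matrix.add_mul, Matrix.mul_add, Matrix.mul_assoc]
      abel
    rw [iden, hPstarRic, z1, z2, Matrix.mul_zero, Matrix.mul_zero]
    simp
  -- the equation for the updated gain against the old solution
  have eqNext : ∀ j, (A - B*K (j+1))ᵀ*P j + P j*(A - B*K (j+1)) + Cᵀ*Q*C
      + (K (j+1))ᵀ*R*(K (j+1)) + (K j - K (j+1))ᵀ*R*(K j - K (j+1)) = 0 := by
    intro j
    have z1 : Bᵀ*P j - R*K (j+1) = 0 := by rw [hBtP j, sub_self]
    have z2 : P j*B - (K (j+1))ᵀ*R = 0 := by rw [hPB j, sub_self]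
    have iden : (A - B*K (j+1))ᵀ*P j + P j*(A - B*K (j+1)) + Cᵀ*Q*C
        + (K (j+1))ᵀ*R*(K (j+1)) + (K j - K (j+1))ᵀ*R*(K j - K (j+1))
        = ((A - B*K j)ᵀ*P j + P j*(A - B*K j) + Cᵀ*Q*C + (K j)ᵀ*R*K j)
          + ((K j)ᵀ - (K (j+1))ᵀ)*(Bᵀ*P j - R*K (j+1))
          + (P j*B - (K (j+1))ᵀ*R)*(K j - K (j+1)) := by
      simp only [Matrix.transpose_sub, Matrix.transpose_mul, Matrix.sub_mul,
        Matrix.mul_sub, Matrix.add_mul, Matrix.mul_add, Matrix.mul_assoc]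
      abel
    rw [iden, (hP j).2, z1, z2, Matrix.mul_zero, Matrix.zero_mul]
    simp
  -- the equation for P j - Pstar
  have eqDelta : ∀ j, (A - B*K j)ᵀ*(P j - Pstar) + (P j - Pstar)*(A - B*K j)
      + (K j - Kstar)ᵀ*R*(K j - Kstar) = 0 := by
    intro j
    have z1 : Bᵀ*Pstar - R*Kstar = 0 := by rw [hBtPs, sub_self]
    have z2 : Pstar*B - Kstarᵀ*R = 0 := by rw [hPsB, sub_self]
    have iden : (A - B*K j)ᵀ*(P j - Pstar) + (P j - Pstar)*(A - B*K j)
        + (K j - Kstar)ᵀ*R*(K j - Kstar)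
        = ((A - B*K j)ᵀ*P j + P j*(A - B*K j) + Cᵀ*Q*C + (K j)ᵀ*R*K j)
          - ((A - B*Kstar)ᵀ*Pstar + Pstar*(A - B*Kstar) + Cᵀ*Q*C + Kstarᵀ*R*Kstar)
          + ((K j)ᵀ - Kstarᵀ)*(Bᵀ*Pstar - R*Kstar)
          + (Pstar*B - Kstarᵀ*R)*(K j - Kstar) := by
      simp only [Matrix.transpose_sub, Matrix.transpose_mul, Matrix.sub_mul,
        Matrix.mul_sub, Matrix.add_mul, Matrix.mul_add, Matrix.mul_assoc]
      abel
    rw [iden, (hP j).2, eqStarQ, z1, z2, Matrix.mul_zero, Matrix.zero_mul]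
    simp
  -- the equation for P j - P (j+1)
  have eqE : ∀ j, (A - B*K (j+1))ᵀ*(P j - P (j+1)) + (P j - P (j+1))*(A - B*K (j+1))
      + (K j - K (j+1))ᵀ*R*(K j - K (j+1)) = 0 := by
    intro j
    have iden : (A - B*K (j+1))ᵀ*(P j - P (j+1)) + (P j - P (j+1))*(A - B*K (j+1))
        + (K j - K (j+1))ᵀ*R*(K j - K (j+1))
        = ((A - B*K (j+1))ᵀ*P j + P j*(A - B*K (j+1)) + Cᵀ*Q*C
            + (K (j+1))ᵀ*R*(K (j+1)) + (K j - K (j+1))ᵀ*R*(K j - K (j+1)))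
          - ((A - B*K (j+1))ᵀ*P (j+1) + P (j+1)*(A - B*K (j+1)) + Cᵀ*Q*C
            + (K (j+1))ᵀ*R*K (j+1)) := by
      simp only [Matrix.transpose_sub, Matrix.transpose_mul, Matrix.sub_mul,
        Matrix.mul_sub, Matrix.add_mul, Matrix.mul_add, Matrix.mul_assoc]
      abel
    rw [iden, eqNext j, (hP (j+1)).2, sub_zero]
  have hsymD : ∀ j, (P j - Pstar)ᵀ = P j - Pstar := by
    intro j; rw [Matrix.transpose_sub, (hP j).1, hPstarSym]
  have hsymE : ∀ j, (P j - P (j+1))ᵀ = P j - P (j+1) := by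
    intro j; rw [Matrix.transpose_sub, (hP j).1, (hP (j+1)).1]
  have hPD : ∀ j, IsHurwitz (A - B*K j) → (P j - Pstar).PosSemidef := fun j hj =>
    lyap_psd hj (hsymD j) (sandwich_psd_real hR.posSemidef) (eqDelta j)
  -- (1) all closed loops are Hurwitz
  have hHur : ∀ j, IsHurwitz (A - B*K j) := by
    intro j
    induction j with
    | zero => exact hK0
    | succ j ih =>
      have hΔ := hPD j ih
      have hPDj : (P j).PosDef := by
        rw [show P j = Pstar + (P j - Pstar) by abel]
        exact hPstarPD.add_posSemidef hΔ
      have heq' := eqNext j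
      rw [hCQC] at heq'
      exact hurwitz_step A B (sqrtQ*C) R hR hobs (P j) hPDj (K (j+1)) (K j - K (j+1)) heq'
  -- (2) monotonicity
  have hEpsd : ∀ j, (P j - P (j+1)).PosSemidef := fun j =>
    lyap_psd (hHur (j+1)) (hsymE j) (sandwich_psd_real hR.posSemidef) (eqE j)
  have hDpsd : ∀ j, (P j - Pstar).PosSemidef := fun j => hPD j (hHur j)
  -- (3) convergence
  have hanti : ∀ x : Fin n → ℝ, Antitone (fun j => x ⬝ᵥ P j *ᵥ x) := by
    intro x
    apply antitone_nat_of_succ_le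
    intro j
    have := psd_form (hEpsd j) x
    rw [Matrix.sub_mulVec, dotProduct_sub] at this
    linarith
  have hbdd : ∀ (x : Fin n → ℝ) j, x ⬝ᵥ Pstar *ᵥ x ≤ x ⬝ᵥ P j *ᵥ x := by
    intro x j
    have := psd_form (hDpsd j) x
    rw [Matrix.sub_mulVec, dotProduct_sub] at this
    linarith
  have hconv : ∀ x : Fin n → ℝ,
      Tendsto (fun j => x ⬝ᵥ P j *ᵥ x) atTop (𝓝 (⨅ j, x ⬝ᵥ P j *ᵥ x)) := fun x =>
    tendsto_atTop_ciInf (hanti x) ⟨x ⬝ᵥ Pstar *ᵥ x, by rintro y ⟨j, rfl⟩; exact hbdd x j⟩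
  set L : (Fin n → ℝ) → ℝ := fun x => ⨅ j, x ⬝ᵥ P j *ᵥ x with hL
  set Pinf : Matrix (Fin n) (Fin n) ℝ := Matrix.of (fun i k =>
    (L (Pi.single i 1 + Pi.single k 1) - L (Pi.single i 1) - L (Pi.single k 1))/2)
    with hPinf_def
  have hPtendEntry : ∀ i k, Tendsto (fun j => P j i k) atTop (𝓝 (Pinf i k)) := by
    intro i k
    have h1 := hconv (Pi.single i 1 + Pi.single k 1)
    have h2 := hconv (Pi.single i 1)
    have h3 := hconv (Pi.single k 1)
    have hcomb := ((h1.sub h2).sub h3).div_const 2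
    apply hcomb.congr
    intro j
    exact (entry_eq_forms (hP j).1 i k).symm
  have hPtend : Tendsto P atTop (𝓝 Pinf) := by
    apply tendsto_pi_nhds.mpr
    intro i
    apply tendsto_pi_nhds.mpr
    intro k
    exact hPtendEntry i k
  have hPinfSym : Pinfᵀ = Pinf := by
    ext i k
    show Pinf k i = Pinf i k
    simp only [hPinf_def, Matrix.of_apply]
    rw [add_comm]
    ring
  set Kinf : Matrix (Fin m) (Fin n) ℝ := R⁻¹ * Bᵀ * Pinf with hKinf_def
  have hKshift : Tendsto (fun j => K (j+1)) atTop (𝓝 Kinf) := by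
    have hc : Continuous (fun M : Matrix (Fin n) (Fin n) ℝ => R⁻¹ * Bᵀ * M) :=
      continuous_const.matrix_mul continuous_id
    have := (hc.tendsto Pinf).comp hPtend
    apply this.congr
    intro j
    exact (hKsucc j).symm
  have hKtend : Tendsto K atTop (𝓝 Kinf) := (tendsto_add_atTop_iff_nat 1).mp hKshift
  -- pass to the limit in the Lyapunov equation
  have hPhiInf : (A - B*Kinf)ᵀ*Pinf + Pinf*(A - B*Kinf) + Cᵀ*Q*C + Kinfᵀ*R*Kinf = 0 := by
    have c2 : Continuous (fun pr : Matrix (Fin n) (Fin n) ℝ × Matrix (Fin m) (Fin n) ℝ =>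
        A - B*pr.2) := continuous_const.sub (continuous_const.matrix_mul continuous_snd)
    have hPhiCont : Continuous (fun pr : Matrix (Fin n) (Fin n) ℝ × Matrix (Fin m) (Fin n) ℝ =>
        (A - B*pr.2)ᵀ*pr.1 + pr.1*(A - B*pr.2) + Cᵀ*Q*C + pr.2ᵀ*R*pr.2) :=
      (((c2.matrix_transpose.matrix_mul continuous_fst).add
        (continuous_fst.matrix_mul c2)).add continuous_const).add
        ((continuous_snd.matrix_transpose.matrix_mul continuous_const).matrix_mul
          continuous_snd)
    have ht := (hPhiCont.tendsto (Pinf, Kinf)).comp (Filter.Tendsto.prodMk_nhds hPtend hKtend)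
    have ht0 : Tendsto (fun j => (A - B*K j)ᵀ*P j + P j*(A - B*K j) + Cᵀ*Q*C
        + (K j)ᵀ*R*K j) atTop
        (𝓝 ((A - B*Kinf)ᵀ*Pinf + Pinf*(A - B*Kinf) + Cᵀ*Q*C + Kinfᵀ*R*Kinf)) := by
      apply ht.congr
      intro j
      rfl
    have htz : Tendsto (fun j => (A - B*K j)ᵀ*P j + P j*(A - B*K j) + Cᵀ*Q*C
        + (K j)ᵀ*R*K j) atTop (𝓝 (0 : Matrix (Fin n) (Fin n) ℝ)) := by
      have : (fun j => (A - B*K j)ᵀ*P j + P j*(A - B*K j) + Cᵀ*Q*C + (K j)ᵀ*R*K j)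
          = fun _ => (0 : Matrix (Fin n) (Fin n) ℝ) := funext fun j => (hP j).2
      rw [this]
      exact tendsto_const_nhds
    exact tendsto_nhds_unique ht0 htz
  have hBtPi : Bᵀ * Pinf = R * Kinf := by
    rw [hKinf_def, ← Matrix.mul_assoc, ← Matrix.mul_assoc,
      Matrix.mul_nonsing_inv R hRdet, Matrix.one_mul]
  have hPiB : Pinf * B = Kinfᵀ * R := by
    have := congrArg Matrix.transpose hBtPi
    simpa [Matrix.transpose_mul, hPinfSym, hRsym] using this
  -- the difference Pstar - Pinf satisfies a Lyapunov equation for A - B Kstar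
  have eqNeg : (A - B*Kstar)ᵀ*(Pstar - Pinf) + (Pstar - Pinf)*(A - B*Kstar)
      + (Kinf - Kstar)ᵀ*R*(Kinf - Kstar) = 0 := by
    have z1 : Bᵀ*Pinf - R*Kinf = 0 := by rw [hBtPi, sub_self]
    have z2 : Pinf*B - Kinfᵀ*R = 0 := by rw [hPiB, sub_self]
    have iden : (A - B*Kstar)ᵀ*(Pstar - Pinf) + (Pstar - Pinf)*(A - B*Kstar)
        + (Kinf - Kstar)ᵀ*R*(Kinf - Kstar)
        = ((A - B*Kstar)ᵀ*Pstar + Pstar*(A - B*Kstar) + Cᵀ*Q*C + Kstarᵀ*R*Kstar)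
          - ((A - B*Kinf)ᵀ*Pinf + Pinf*(A - B*Kinf) + Cᵀ*Q*C + Kinfᵀ*R*Kinf)
          - (Kinfᵀ - Kstarᵀ)*(Bᵀ*Pinf - R*Kinf)
          - (Pinf*B - Kinfᵀ*R)*(Kinf - Kstar) := by
      simp only [Matrix.transpose_sub, Matrix.transpose_mul, Matrix.sub_mul,
        Matrix.mul_sub, Matrix.add_mul, Matrix.mul_add, Matrix.mul_assoc]
      abel
    rw [iden, eqStarQ, hPhiInf, z1, z2, Matrix.mul_zero, Matrix.zero_mul]
    simp
  have hHurS : IsHurwitz (A - B*Kstar) := by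
    have heqS : (A - B*Kstar)ᵀ*Pstar + Pstar*(A - B*Kstar) + (sqrtQ*C)ᵀ*(sqrtQ*C)
        + Kstarᵀ*R*Kstar + (0 : Matrix (Fin m) (Fin n) ℝ)ᵀ*R*(0 : Matrix (Fin m) (Fin n) ℝ)
        = 0 := by
      rw [← hCQC]
      simpa using eqStarQ
    exact hurwitz_step A B (sqrtQ*C) R hR hobs Pstar hPstarPD Kstar 0 heqS
  have hnegpsd : (Pstar - Pinf).PosSemidef :=
    lyap_psd hHurS (by rw [Matrix.transpose_sub, hPstarSym, hPinfSym])
      (sandwich_psd_real hR.posSemidef) eqNeg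
  have hform : ∀ x : Fin n → ℝ, Tendsto (fun j => x ⬝ᵥ P j *ᵥ x) atTop
      (𝓝 (x ⬝ᵥ Pinf *ᵥ x)) := by
    intro x
    have hc : Continuous (fun M : Matrix (Fin n) (Fin n) ℝ => x ⬝ᵥ M *ᵥ x) :=
      continuous_const.dotProduct (continuous_id.matrix_mulVec continuous_const)
    exact ((hc.tendsto Pinf).comp hPtend).congr fun j => rfl
  have hpospsd : (Pinf - Pstar).PosSemidef := by
    refine psd_of_forms (by rw [Matrix.transpose_sub, hPstarSym, hPinfSym]) fun x => ?_
    rw [Matrix.sub_mulVec, dotProduct_sub, sub_nonneg]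
    have htd : Tendsto (fun j => x ⬝ᵥ P j *ᵥ x) atTop (𝓝 (x ⬝ᵥ Pinf *ᵥ x)) := hform x
    exact ge_of_tendsto htd (Eventually.of_forall fun j => hbdd x j)
  have hPinfEq : Pinf = Pstar := by
    have hPP : Pinf - Pstar = 0 :=
      psd_antisymm hpospsd (by rw [neg_sub]; exact hnegpsd)
    exact sub_eq_zero.mp hPP
  refine ⟨hHur, fun j => ⟨hEpsd j, hDpsd (j+1)⟩, ?_, ?_⟩
  · have hKK : Kinf = Kstar := by rw [hKinf_def, hPinfEq, ← hKstar]
    rw [← hKK]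
    exact hKtend
  · rw [← hPinfEq]
    exact hPtend
end
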